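/- Let μ be a dominant cocharacter. For every w ∈ W, the translation element t_{wμ} is strongly admissible, i.e., t_{wμ} ∈ Adm^{st}(μ). More precisely, for every u ∈ W and every ν ∈ X_* dominant with ν ⪯ μ in the dominance order, there is a sequence of affine reflections, each in the u-opposite direction, carrying the alcove t_{uμ}(ā) to t_{ν}(ā). -/

import Mathlib

open scoped Classical

namespace Paper

variable (V : Type*) [AddCommGroup V] [Module ℝ V]

/-- A based reduced root system `Σ = (X^*, X_*, R, R^∨, Π)` realized inside the real
vector space `V = X_* ⊗ ℝ`: roots are linear functionals, coroots are vectors,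
`X` is the cocharacter lattice, and `isPos` singles out the positive roots. -/
structure BasedRootSystem where
  /-- index set of the (finitely many) roots -/
  ι : Type
  fintype_ι : Fintype ι
  root : ι → V →ₗ[ℝ] ℝ
  coroot : ι → V
  /-- the positive roots -/
  isPos : ι → Prop
  root_coroot_self : ∀ i, root i (coroot i) = 2
  root_ne : ∀ i, root i ≠ 0
  /-- reduced: proportional roots are equal or opposite -/
  reduced : ∀ i j (c : ℝ), root i = c • root j → root i = root j ∨ root i = - root j
  /-- the cocharacter lattice `X_*` -/
  X : AddSubgroup V
  coroot_mem : ∀ i, coroot i ∈ X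
  root_int : ∀ i, ∀ x ∈ X, ∃ n : ℤ, root i x = n
  pos_or_neg : ∀ i, isPos i ∨ ∃ j, isPos j ∧ root i = - root j ∧ coroot i = - coroot j
  /-- simple reflections permute the roots and coroots compatibly -/
  refl_root : ∀ i j, ∃ k, root k = root j - root j (coroot i) • root i ∧
      coroot k = coroot j - root i (coroot j) • coroot i

attribute [instance] BasedRootSystem.fintype_ι

namespace BasedRootSystem

variable {V} (P : BasedRootSystem V)

/-- the finite reflection `s_α` -/
def sLin (i : P.ι) : V ≃ₗ[ℝ] V := Module.reflection (P.root_coroot_self i)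

/-- the finite Weyl group `W`, as a subgroup of the linear automorphisms of `V` -/
def Wfin : Subgroup (V ≃ₗ[ℝ] V) := Subgroup.closure (Set.range P.sLin)

/-- the affine reflection `s_{α + k}`, `x ↦ x - (⟨α,x⟩ + k)α^∨` -/
def sAff (i : P.ι) (k : ℤ) : V ≃ᵃ[ℝ] V :=
  (P.sLin i).toAffineEquiv.trans (AffineEquiv.constVAdd ℝ V (-(k : ℝ) • P.coroot i))

/-- the translation `t_v` -/
def transl (v : V) : V ≃ᵃ[ℝ] V := AffineEquiv.constVAdd ℝ V v

/-- the affine Weyl group `W_aff` -/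
def Waff : Subgroup (V ≃ᵃ[ℝ] V) := Subgroup.closure {g | ∃ i k, g = P.sAff i k}

/-- the extended affine Weyl group `W̃ = X_* ⋊ W` -/
def Wext : Subgroup (V ≃ᵃ[ℝ] V) :=
  Subgroup.closure ({g | ∃ i k, g = P.sAff i k} ∪ {g | ∃ v ∈ P.X, g = transl v})

/-- the dominant Weyl chamber `C` -/
def domC : Set V := {x | ∀ i, P.isPos i → 0 < P.root i x}

/-- the base alcove `ā` in the antidominant chamber -/
def baseAlc : Set V := {x | ∀ i, P.isPos i → P.root i x ∈ Set.Ioo (-1 : ℝ) 0}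

/-- `μ` is a dominant cocharacter -/
def Dominant (μ : V) : Prop := μ ∈ P.X ∧ ∀ i, P.isPos i → 0 ≤ P.root i μ

/-- dominance order: `ν ⪯ μ` iff `μ - ν` is a nonnegative integral combination
of positive coroots -/
def domOrder (ν μ : V) : Prop :=
  ∃ c : P.ι → ℕ, (∀ i, ¬ P.isPos i → c i = 0) ∧
    μ - ν = ∑ i, (c i : ℝ) • P.coroot i

/-- the root `α_i ∘ w` is positive on the dominant chamber, i.e. `α_i` is positive
deep inside the chamber `wC` -/
def PosOn (w : V ≃ₗ[ℝ] V) (i : P.ι) : Prop := ∀ c ∈ P.domC, 0 < P.root i (w c)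

/-- `H^{w+}`: the (open) side of `H_{α_i + k}` containing all alcoves sufficiently deep
inside the Weyl chamber `wC` -/
def wPlus (w : V ≃ₗ[ℝ] V) (i : P.ι) (k : ℤ) : Set V :=
  if P.PosOn w i then {x | 0 < P.root i x + k} else {x | P.root i x + (k : ℝ) < 0}

/-- `H^{w-}`: the side of `H_{α_i + k}` opposite to `H^{w+}` -/
def wMinus (w : V ≃ₗ[ℝ] V) (i : P.ι) (k : ℤ) : Set V :=
  if P.PosOn w i then {x | P.root i x + (k : ℝ) < 0} else {x | 0 < P.root i x + k}

/-- a single affine reflection applied to a subset of `V`, in the `w`-opposite direction -/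
def StepOpp (w : V ≃ₗ[ℝ] V) (A A' : Set V) : Prop :=
  ∃ i k, A' = P.sAff i k '' A ∧ A ⊆ P.wPlus w i k ∧ A' ⊆ P.wMinus w i k

/-- `B` is obtained from `A` by a sequence of affine reflections in the `w`-opposite
direction; so `x(ā) ∈ B(t_{wμ}(ā), w)` iff `ReachOpp w (t_{wμ}(ā)) (x(ā))`. -/
def ReachOpp (w : V ≃ₗ[ℝ] V) : Set V → Set V → Prop := Relation.ReflTransGen (P.StepOpp w)

/-- a single affine reflection applied to a point, in the `w`-opposite direction -/
def StepOppPt (w : V ≃ₗ[ℝ] V) (p q : V) : Prop :=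
  ∃ i k, q = P.sAff i k p ∧ p ∈ P.wPlus w i k ∧ q ∈ P.wMinus w i k

/-- `q ∈ B(p, w)`: the point `q` is obtained from `p` by a sequence of affine
reflections in the `w`-opposite direction -/
def ReachOppPt (w : V ≃ₗ[ℝ] V) : V → V → Prop := Relation.ReflTransGen (P.StepOppPt w)

/-- the affine hyperplane `H_{α_i + k}` -/
def hyp (i : P.ι) (k : ℤ) : Set V := {x | P.root i x + k = 0}

/-- the hyperplane `H_{α_i + k}` separates `A` and `B` -/
def Sep (i : P.ι) (k : ℤ) (A B : Set V) : Prop :=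
  (A ⊆ {x | 0 < P.root i x + k} ∧ B ⊆ {x | P.root i x + (k : ℝ) < 0}) ∨
  (B ⊆ {x | 0 < P.root i x + k} ∧ A ⊆ {x | P.root i x + (k : ℝ) < 0})

/-- the length of `x`: the number of affine root hyperplanes separating the base
alcove `ā` from `x(ā)` -/
noncomputable def lenA (x : V ≃ᵃ[ℝ] V) : ℕ :=
  Set.ncard {p : P.ι × ℤ | P.isPos p.1 ∧ P.Sep p.1 p.2 P.baseAlc (⇑x '' P.baseAlc)}

/-- the Bruhat order on the (extended) affine Weyl group, defined by the base alcove `ā`: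
generated by multiplication by affine reflections which increase the length -/
def BruhatLE : (V ≃ᵃ[ℝ] V) → (V ≃ᵃ[ℝ] V) → Prop :=
  Relation.ReflTransGen (fun u v => (∃ i k, v = P.sAff i k * u) ∧ P.lenA u < P.lenA v)

/-- `x ∈ W_aff τ_μ` -/
def InWaffCoset (μ : V) (x : V ≃ᵃ[ℝ] V) : Prop := ∃ u ∈ P.Waff, x = u * transl μ

/-- the `μ`-admissible set `Adm(μ)` -/
def Adm (μ : V) : Set (V ≃ᵃ[ℝ] V) :=
  {x | P.InWaffCoset μ x ∧ ∃ w ∈ P.Wfin, P.BruhatLE x (transl (w μ))}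

/-- the strongly admissible set `Adm^{st}(μ) = ∩_{w ∈ W} B(t_{wμ}(ā), w)` -/
def AdmSt (μ : V) : Set (V ≃ᵃ[ℝ] V) :=
  {x | P.InWaffCoset μ x ∧
    ∀ w ∈ P.Wfin, P.ReachOpp w (⇑(transl (w μ)) '' P.baseAlc) (⇑x '' P.baseAlc)}

/-- a gallery crossing in the `w`-direction: a reflection taking the alcove `A` to the
adjacent alcove `A'` across their common wall, from the `w-` side to the `w+` side -/
def StepDir (w : V ≃ₗ[ℝ] V) (A A' : Set V) : Prop :=
  ∃ i k, A' = P.sAff i k '' A ∧ A ⊆ P.wMinus w i k ∧ A' ⊆ P.wPlus w i k ∧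
    ∀ j m, P.isPos j → P.Sep j m A A' → P.hyp j m = P.hyp i k

/-- the acute cone `C(ā, w)`: alcoves reachable from `ā` by a gallery all of whose
crossings are in the `w`-direction -/
def InAcuteCone (w : V ≃ₗ[ℝ] V) (A : Set V) : Prop :=
  Relation.ReflTransGen (P.StepDir w) P.baseAlc A

/-- the set `S_aff` of simple affine reflections: affine reflections of length one -/
def SAffSet : Set (V ≃ᵃ[ℝ] V) := {g | (∃ i k, g = P.sAff i k) ∧ P.lenA g = 1}

/-- the subgroup `W_J` generated by `J ⊆ S_aff` -/
def WJ (J : Set (V ≃ᵃ[ℝ] V)) : Subgroup (V ≃ᵃ[ℝ] V) := Subgroup.closure J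

/-- the parahoric admissible set `Adm^J(μ) = W_J Adm(μ) W_J` -/
def AdmJ (μ : V) (J : Set (V ≃ᵃ[ℝ] V)) : Set (V ≃ᵃ[ℝ] V) :=
  {x | ∃ u ∈ WJ J, ∃ y ∈ P.Adm μ, ∃ v ∈ WJ J, x = u * y * v}

/-- the negative obtuse cone `B_0` generated by the negatives of the positive coroots -/
def obtuseCone : Set V :=
  {v | ∃ c : P.ι → ℝ, (∀ i, 0 ≤ c i) ∧
    v = ∑ i, if P.isPos i then c i • (-P.coroot i) else 0}

/-- the orbit `Wμ` -/
def orbit (μ : V) : Set V := {v | ∃ w ∈ P.Wfin, v = w μ}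

section Top

variable [TopologicalSpace V]

/-- an alcove: a connected component of the complement of the affine root hyperplanes -/
def IsAlcove (A : Set V) : Prop :=
  ∃ x ∈ (⋃ i, ⋃ k : ℤ, P.hyp i k)ᶜ,
    A = connectedComponentIn (⋃ i, ⋃ k : ℤ, P.hyp i k)ᶜ x

/-- `a` is a vertex of the base alcove `ā` whose type does not lie in `J`: a point of
`cl(ā)` fixed by every simple affine reflection except a single one `g ∉ J`. -/
def IsVertexTypeNotIn (J : Set (V ≃ᵃ[ℝ] V)) (a : V) : Prop :=
  a ∈ closure P.baseAlc ∧
    ∃ g ∈ P.SAffSet, g ∉ J ∧ (∀ h ∈ P.SAffSet, h ≠ g → h a = a) ∧ g a ≠ a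

/-- `H^+_{α̃}`: the side of the wall `H_{α_i+k}` containing the base alcove `ā` -/
def HplusBase (i : P.ι) (k : ℤ) : Set V :=
  if P.baseAlc ⊆ {x | 0 < P.root i x + k} then {x | 0 < P.root i x + k}
  else {x | P.root i x + (k : ℝ) < 0}

end Top


/-! ### Auxiliary development for the main theorem -/

section Aux

lemma sLin_apply (i : P.ι) (x : V) : P.sLin i x = x - P.root i x • P.coroot i :=
  Module.reflection_apply _ _

lemma sLin_sLin (i : P.ι) (x : V) : P.sLin i (P.sLin i x) = x :=
  Module.involutive_reflection (P.root_coroot_self i) x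

lemma sLin_mem_Wfin (i : P.ι) : P.sLin i ∈ P.Wfin :=
  Subgroup.subset_closure ⟨i, rfl⟩

lemma root_comp_sLin (i j : P.ι) :
    ∃ k, (P.root j).comp (P.sLin i).toLinearMap = P.root k ∧
      P.coroot k = P.coroot j - P.root i (P.coroot j) • P.coroot i := by
  obtain ⟨k, hk1, hk2⟩ := P.refl_root i j
  refine ⟨k, ?_, hk2⟩
  ext x
  simp only [LinearMap.comp_apply, LinearEquiv.coe_coe, sLin_apply, hk1, map_sub, map_smul,
    LinearMap.sub_apply, LinearMap.smul_apply, smul_eq_mul]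
  ring

lemma sAff_apply (i : P.ι) (k : ℤ) (x : V) :
    P.sAff i k x = P.sLin i x - (k : ℝ) • P.coroot i := by
  simp [sAff, sub_eq_add_neg, add_comm, neg_smul]

lemma transl_apply (v x : V) : (transl v : V ≃ᵃ[ℝ] V) x = v + x := rfl

lemma transl_mul (v w : V) :
    (transl v : V ≃ᵃ[ℝ] V) * transl w = transl (v + w) := by
  ext x
  show (transl v : V ≃ᵃ[ℝ] V) ((transl w : V ≃ᵃ[ℝ] V) x) = (transl (v+w) : V ≃ᵃ[ℝ] V) x
  simp [transl_apply, add_assoc]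

lemma root_sLin_self (i : P.ι) : P.sLin i (P.coroot i) = - P.coroot i := by
  rw [sLin_apply, P.root_coroot_self]
  module

/-- value of a root on a reflected point -/
lemma root_sAff (i : P.ι) (k : ℤ) (x : V) :
    P.root i (P.sAff i k x) + k = -(P.root i x + k) := by
  rw [sAff_apply, sLin_apply]
  simp [P.root_coroot_self]
  ring

end Aux


section PartA

/-- the coroot lattice -/
def Lcor : AddSubgroup V := AddSubgroup.closure (Set.range P.coroot)

lemma coroot_mem_Lcor (i : P.ι) : P.coroot i ∈ P.Lcor := by
  show P.coroot i ∈ AddSubgroup.closure (Set.range P.coroot)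
  exact AddSubgroup.subset_closure (Set.mem_range_self i)

lemma transl_coroot_mem_Waff (i : P.ι) :
    (transl (P.coroot i) : V ≃ᵃ[ℝ] V) ∈ P.Waff := by
  have h : (transl (P.coroot i) : V ≃ᵃ[ℝ] V) = P.sAff i 0 * P.sAff i 1 := by
    ext x
    show (transl (P.coroot i) : V ≃ᵃ[ℝ] V) x = P.sAff i 0 (P.sAff i 1 x)
    rw [transl_apply, sAff_apply, sAff_apply, sLin_apply, sLin_apply]
    simp only [map_sub, map_smul, P.root_coroot_self, smul_eq_mul]
    module
  rw [h]
  exact mul_mem (Subgroup.subset_closure ⟨i, 0, rfl⟩) (Subgroup.subset_closure ⟨i, 1, rfl⟩)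

lemma transl_mem_Waff_of_Lcor {v : V} (hv : v ∈ P.Lcor) :
    (transl v : V ≃ᵃ[ℝ] V) ∈ P.Waff := by
  induction hv using AddSubgroup.closure_induction with
  | mem x hx => obtain ⟨i, rfl⟩ := hx; exact P.transl_coroot_mem_Waff i
  | zero =>
      have : (transl (0:V) : V ≃ᵃ[ℝ] V) = 1 := by
        ext x; show (transl (0:V) : V ≃ᵃ[ℝ] V) x = x; simp [transl_apply]
      rw [this]; exact one_mem _
  | add x y hx hy hx' hy' => rw [← transl_mul]; exact mul_mem hx' hy'
  | neg x hx hx' =>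
      have : (transl (-x) : V ≃ᵃ[ℝ] V) = (transl x : V ≃ᵃ[ℝ] V)⁻¹ := by
        rw [eq_inv_iff_mul_eq_one, transl_mul, neg_add_cancel]
        ext y; show (transl (0:V) : V ≃ᵃ[ℝ] V) y = y; simp [transl_apply]
      rw [this]; exact inv_mem hx'

lemma Wfin_X_stable : ∀ w ∈ P.Wfin,
    (∀ x ∈ P.X, w x ∈ P.X ∧ w x - x ∈ P.Lcor) ∧
    (∀ x ∈ P.X, w⁻¹ x ∈ P.X ∧ w⁻¹ x - x ∈ P.Lcor) := by
  intro w hw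
  induction hw using Subgroup.closure_induction with
  | mem g hg =>
      obtain ⟨i, rfl⟩ := hg
      have key : ∀ x ∈ P.X, P.sLin i x ∈ P.X ∧ P.sLin i x - x ∈ P.Lcor := by
        intro x hx
        obtain ⟨n, hn⟩ := P.root_int i x hx
        have h1 : P.sLin i x - x = (-n : ℤ) • P.coroot i := by
          rw [sLin_apply, hn]; push_cast; module
        constructor
        · have : P.sLin i x = x + (-n : ℤ) • P.coroot i := by rw [← h1]; abel
          rw [this]
          exact add_mem hx (zsmul_mem (P.coroot_mem i) _)
        · rw [h1]; exact zsmul_mem (P.coroot_mem_Lcor i) _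
      have hinv : (P.sLin i)⁻¹ = P.sLin i := by
        apply LinearEquiv.toEquiv_injective
        apply Equiv.ext
        intro x
        have := P.sLin_sLin i x
        calc (P.sLin i)⁻¹ x = (P.sLin i)⁻¹ (P.sLin i (P.sLin i x)) := by rw [this]
        _ = P.sLin i x := by
            show ((P.sLin i) * (P.sLin i)⁻¹) (P.sLin i x) = _
            rw [mul_inv_cancel]; rfl
      exact ⟨key, by rw [hinv]; exact key⟩
  | one =>
      have h : ∀ x ∈ P.X, x ∈ P.X ∧ x - x ∈ P.Lcor :=
        fun x hx => ⟨hx, by simpa using (zero_mem P.Lcor)⟩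
      exact ⟨fun x hx => h x hx, fun x hx => h x hx⟩
  | mul v w hv hw hv' hw' =>
      obtain ⟨hv1, hv2⟩ := hv'
      obtain ⟨hw1, hw2⟩ := hw'
      constructor
      · intro x hx
        have h1 : (v * w) x = v (w x) := rfl
        obtain ⟨hwx, hwx2⟩ := hw1 x hx
        obtain ⟨hvwx, hvwx2⟩ := hv1 _ hwx
        refine ⟨by rw [h1]; exact hvwx, ?_⟩
        have : (v * w) x - x = (v (w x) - w x) + (w x - x) := by rw [h1]; abel
        rw [this]; exact add_mem hvwx2 hwx2
      · intro x hx
        have h1 : (v * w)⁻¹ x = w⁻¹ (v⁻¹ x) := by rw [mul_inv_rev]; rfl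
        obtain ⟨hvx, hvx2⟩ := hv2 x hx
        obtain ⟨hwvx, hwvx2⟩ := hw2 _ hvx
        refine ⟨by rw [h1]; exact hwvx, ?_⟩
        have : (v * w)⁻¹ x - x = (w⁻¹ (v⁻¹ x) - v⁻¹ x) + (v⁻¹ x - x) := by rw [h1]; abel
        rw [this]; exact add_mem hwvx2 hvx2
  | inv v hv hv' => exact ⟨hv'.2, by simpa using hv'.1⟩

lemma Wfin_smul_mem_X {w : V ≃ₗ[ℝ] V} (hw : w ∈ P.Wfin) {x : V} (hx : x ∈ P.X) :
    w x ∈ P.X := ((P.Wfin_X_stable w hw).1 x hx).1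

lemma Wfin_sub_mem_Lcor {w : V ≃ₗ[ℝ] V} (hw : w ∈ P.Wfin) {x : V} (hx : x ∈ P.X) :
    w x - x ∈ P.Lcor := ((P.Wfin_X_stable w hw).1 x hx).2

lemma transl_smul_inWaffCoset {w : V ≃ₗ[ℝ] V} (hw : w ∈ P.Wfin) {μ : V} (hμ : μ ∈ P.X) :
    P.InWaffCoset μ (transl (w μ)) := by
  refine ⟨transl (w μ - μ), P.transl_mem_Waff_of_Lcor (P.Wfin_sub_mem_Lcor hw hμ), ?_⟩
  rw [transl_mul, sub_add_cancel]

end PartA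


section Moves

/-- the basic two-reflection move: from the translation alcove `t_λ(ā)` one reaches
`t_{λ - α_i^∨}(ā)` (if `α_i ∘ u > 0` on `C`) resp. `t_{λ + α_i^∨}(ā)` (otherwise) by two
reflections in the `u`-opposite direction. -/
lemma reach_one (u : V ≃ₗ[ℝ] V) {i : P.ι} (hi : P.isPos i) {lam : V} {n : ℤ}
    (hn : P.root i lam = n) :
    P.ReachOpp u (⇑(transl lam) '' P.baseAlc)
      (⇑(transl (lam - (if P.PosOn u i then P.coroot i else - P.coroot i))) '' P.baseAlc) := by
  set A : Set V := ⇑(transl lam) '' P.baseAlc with hA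
  by_cases hP : P.PosOn u i
  · -- `k = 1 - n`, `k' = 2 - n`, end at `lam - coroot i`
    rw [if_pos hP]
    set k : ℤ := 1 - n with hk
    set k' : ℤ := 2 - n with hk'
    have hbound : ∀ y ∈ A, 0 < P.root i y + (k : ℝ) ∧ P.root i y + (k : ℝ) < 1 := by
      rintro y ⟨x, hx, rfl⟩
      have hxi := hx i hi
      rw [transl_apply, map_add, hn, hk]
      push_cast
      constructor <;> [linarith [hxi.1]; linarith [hxi.2]]
    set A' : Set V := ⇑(P.sAff i k) '' A with hA'
    set A'' : Set V := ⇑(P.sAff i k') '' A' with hA''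
    have hbound' : ∀ z ∈ A', -1 < P.root i z + (k : ℝ) ∧ P.root i z + (k : ℝ) < 0 := by
      rintro z ⟨y, hy, rfl⟩
      have h := P.root_sAff i k y
      have hb := hbound y hy
      constructor <;> linarith [hb.1, hb.2, h]
    have step1 : P.StepOpp u A A' := by
      refine ⟨i, k, rfl, ?_, ?_⟩
      · rw [wPlus, if_pos hP]; intro y hy; exact (hbound y hy).1
      · rw [wMinus, if_pos hP]; intro z hz; exact (hbound' z hz).2
    have hbound'' : ∀ z ∈ A', 0 < P.root i z + (k' : ℝ) ∧ P.root i z + (k' : ℝ) < 1 := by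
      intro z hz
      have hkk : (k' : ℝ) = (k : ℝ) + 1 := by rw [hk, hk']; push_cast; ring
      have hb := hbound' z hz
      rw [hkk]; constructor <;> linarith [hb.1, hb.2]
    have step2 : P.StepOpp u A' A'' := by
      refine ⟨i, k', rfl, ?_, ?_⟩
      · rw [wPlus, if_pos hP]; intro z hz; exact (hbound'' z hz).1
      · rw [wMinus, if_pos hP]
        rintro w ⟨z, hz, rfl⟩
        have h := P.root_sAff i k' z
        simp only [Set.mem_setOf_eq]
        linarith [(hbound'' z hz).1, h]
    have himg : A'' = ⇑(transl (lam - P.coroot i)) '' P.baseAlc := by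
      rw [hA'', hA', hA, Set.image_image, Set.image_image]
      apply Set.image_congr'
      intro x
      rw [transl_apply, transl_apply, sAff_apply, sAff_apply, map_sub, map_smul, sLin_sLin,
        root_sLin_self]
      have : (k' : ℝ) = (k : ℝ) + 1 := by rw [hk, hk']; push_cast; ring
      rw [this]
      module
    rw [← himg]
    exact Relation.ReflTransGen.tail (Relation.ReflTransGen.single step1) step2
  · -- `k = -n`, `k' = -n - 1`, end at `lam + coroot i`
    rw [if_neg hP]
    set k : ℤ := -n with hk
    set k' : ℤ := -n - 1 with hk'
    have hbound : ∀ y ∈ A, -1 < P.root i y + (k : ℝ) ∧ P.root i y + (k : ℝ) < 0 := by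
      rintro y ⟨x, hx, rfl⟩
      have hxi := hx i hi
      rw [transl_apply, map_add, hn, hk]
      push_cast
      constructor <;> [linarith [hxi.1]; linarith [hxi.2]]
    set A' : Set V := ⇑(P.sAff i k) '' A with hA'
    set A'' : Set V := ⇑(P.sAff i k') '' A' with hA''
    have hbound' : ∀ z ∈ A', 0 < P.root i z + (k : ℝ) ∧ P.root i z + (k : ℝ) < 1 := by
      rintro z ⟨y, hy, rfl⟩
      have h := P.root_sAff i k y
      have hb := hbound y hy
      constructor <;> linarith [hb.1, hb.2, h]
    have step1 : P.StepOpp u A A' := by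
      refine ⟨i, k, rfl, ?_, ?_⟩
      · rw [wPlus, if_neg hP]; intro y hy; exact (hbound y hy).2
      · rw [wMinus, if_neg hP]; intro z hz; exact (hbound' z hz).1
    have hbound'' : ∀ z ∈ A', -1 < P.root i z + (k' : ℝ) ∧ P.root i z + (k' : ℝ) < 0 := by
      intro z hz
      have hkk : (k' : ℝ) = (k : ℝ) - 1 := by rw [hk, hk']; push_cast; ring
      have hb := hbound' z hz
      rw [hkk]; constructor <;> linarith [hb.1, hb.2]
    have step2 : P.StepOpp u A' A'' := by
      refine ⟨i, k', rfl, ?_, ?_⟩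
      · rw [wPlus, if_neg hP]; intro z hz; exact (hbound'' z hz).2
      · rw [wMinus, if_neg hP]
        rintro w ⟨z, hz, rfl⟩
        have h := P.root_sAff i k' z
        simp only [Set.mem_setOf_eq]
        linarith [(hbound'' z hz).2, h]
    have himg : A'' = ⇑(transl (lam - -P.coroot i)) '' P.baseAlc := by
      rw [hA'', hA', hA, Set.image_image, Set.image_image]
      apply Set.image_congr'
      intro x
      rw [transl_apply, transl_apply, sAff_apply, sAff_apply, map_sub, map_smul, sLin_sLin,
        root_sLin_self]
      have : (k' : ℝ) = (k : ℝ) - 1 := by rw [hk, hk']; push_cast; ring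
      rw [this]
      module
    rw [← himg]
    exact Relation.ReflTransGen.tail (Relation.ReflTransGen.single step1) step2

end Moves


section Equivariance

/-- roots and coroots are permuted compatibly by the Weyl group -/
lemma root_coroot_equivariant : ∀ w ∈ P.Wfin,
    (∀ i, ∃ j, (∀ x, P.root j x = P.root i (w x)) ∧ P.coroot j = w⁻¹ (P.coroot i)) ∧
    (∀ i, ∃ j, (∀ x, P.root j x = P.root i (w⁻¹ x)) ∧ P.coroot j = w (P.coroot i)) := by
  intro w hw
  induction hw using Subgroup.closure_induction with
  | mem g hg =>
      obtain ⟨m, rfl⟩ := hg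
      have hinv : (P.sLin m)⁻¹ = P.sLin m := by
        rw [eq_comm, eq_inv_iff_mul_eq_one]
        apply LinearEquiv.toLinearMap_injective
        apply LinearMap.ext
        intro x
        exact P.sLin_sLin m x
      have key : ∀ i, ∃ j, (∀ x, P.root j x = P.root i (P.sLin m x)) ∧
          P.coroot j = (P.sLin m)⁻¹ (P.coroot i) := by
        intro i
        obtain ⟨k, hk1, hk2⟩ := P.refl_root m i
        refine ⟨k, ?_, ?_⟩
        · intro x
          rw [hk1, sLin_apply]
          simp only [LinearMap.sub_apply, LinearMap.smul_apply, smul_eq_mul, map_sub, map_smul,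
            smul_eq_mul]
          ring
        · rw [hinv, hk2, sLin_apply]
      exact ⟨key, by rw [hinv] at key ⊢; simpa using key⟩
  | one =>
      constructor <;> intro i <;> exact ⟨i, fun x => rfl, by simp⟩
  | mul v w hv hw hv' hw' =>
      constructor
      · intro i
        obtain ⟨j, hj1, hj2⟩ := hv'.1 i
        obtain ⟨k, hk1, hk2⟩ := hw'.1 j
        refine ⟨k, fun x => by rw [hk1 x, hj1 (w x)]; rfl, ?_⟩
        rw [hk2, hj2, mul_inv_rev]; rfl
      · intro i
        obtain ⟨j, hj1, hj2⟩ := hw'.2 i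
        obtain ⟨k, hk1, hk2⟩ := hv'.2 j
        refine ⟨k, fun x => by rw [hk1 x, hj1 (v⁻¹ x), mul_inv_rev]; rfl, ?_⟩
        rw [hk2, hj2]; rfl
  | inv v hv hv' =>
      refine ⟨fun i => ?_, fun i => ?_⟩
      · obtain ⟨j, hj1, hj2⟩ := hv'.2 i
        exact ⟨j, hj1, by rw [hj2, inv_inv]⟩
      · obtain ⟨j, hj1, hj2⟩ := hv'.1 i
        exact ⟨j, fun x => by rw [hj1 x, inv_inv], hj2⟩

/-- sign dichotomy for an arbitrary root at a regular dominant point -/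
lemma sign_dichotomy {cc : V} (hcc : cc ∈ P.domC) (j : P.ι) :
    (P.isPos j ∧ 0 < P.root j cc) ∨
    (∃ j₂, P.isPos j₂ ∧ P.root j = - P.root j₂ ∧ P.coroot j = - P.coroot j₂ ∧
      P.root j cc < 0) := by
  rcases P.pos_or_neg j with h | ⟨j₂, hj₂, hr, hc⟩
  · exact Or.inl ⟨h, hcc j h⟩
  · refine Or.inr ⟨j₂, hj₂, hr, hc, ?_⟩
    rw [hr]
    simpa using hcc j₂ hj₂

/-- the data needed for iterated moves in the `u`-opposite direction -/
lemma hu_provider {cc : V} (hcc : cc ∈ P.domC) {u : V ≃ₗ[ℝ] V} (hu : u ∈ P.Wfin) :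
    ∀ i, P.isPos i → ∃ j, P.isPos j ∧
      u (P.coroot i) = (if P.PosOn u j then P.coroot j else - P.coroot j) := by
  intro i hi
  obtain ⟨j, hj1, hj2⟩ := (P.root_coroot_equivariant u hu).2 i
  have hroot : ∀ x, P.root j (u x) = P.root i x := by
    intro x
    rw [hj1 (u x)]
    congr 1
    exact (LinearEquiv.symm_apply_apply _ _ : u⁻¹ (u x) = x)
  rcases P.sign_dichotomy hcc j with ⟨hjp, _⟩ | ⟨j₂, hj₂p, hr, hc, _⟩
  · refine ⟨j, hjp, ?_⟩
    have hPos : P.PosOn u j := fun c hc => by rw [hroot c]; exact hc i hi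
    rw [if_pos hPos, hj2]
  · refine ⟨j₂, hj₂p, ?_⟩
    have hNeg : ¬ P.PosOn u j₂ := by
      intro hPos
      have h1 := hPos cc hcc
      have h3 := hroot cc
      rw [hr] at h3
      simp only [LinearMap.neg_apply] at h3
      linarith [hcc i hi]
    rw [if_neg hNeg, ← hj2, hc]

end Equivariance

section Iterate

lemma reach_iter {cc : V} (hcc : cc ∈ P.domC) {u : V ≃ₗ[ℝ] V} (hu : u ∈ P.Wfin) :
    ∀ (N : ℕ) (c : P.ι → ℕ), (∀ i, ¬ P.isPos i → c i = 0) → (∑ i, c i ≤ N) →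
    ∀ lam, lam ∈ P.X →
      P.ReachOpp u (⇑(transl lam) '' P.baseAlc)
        (⇑(transl (lam - ∑ i, (c i : ℝ) • u (P.coroot i))) '' P.baseAlc) := by
  intro N
  induction N with
  | zero =>
      intro c hsupp hsum lam hlam
      have hzero : ∀ i, c i = 0 := by
        intro i
        have := Nat.le_zero.mp hsum
        exact (Finset.sum_eq_zero_iff.mp this) i (Finset.mem_univ i)
      have : (∑ i, (c i : ℝ) • u (P.coroot i)) = 0 :=
        Finset.sum_eq_zero (fun i _ => by rw [hzero i]; simp)
      rw [this, sub_zero]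
      exact Relation.ReflTransGen.refl
  | succ N ih =>
      intro c hsupp hsum lam hlam
      by_cases h0 : ∑ i, c i = 0
      · have hzero : ∀ i, c i = 0 :=
          fun i => (Finset.sum_eq_zero_iff.mp h0) i (Finset.mem_univ i)
        have : (∑ i, (c i : ℝ) • u (P.coroot i)) = 0 :=
          Finset.sum_eq_zero (fun i _ => by rw [hzero i]; simp)
        rw [this, sub_zero]
        exact Relation.ReflTransGen.refl
      · obtain ⟨i₀, -, hi₀⟩ := Finset.exists_ne_zero_of_sum_ne_zero h0
        have hpos : P.isPos i₀ := by
          by_contra h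
          exact hi₀ (hsupp i₀ h)
        obtain ⟨j, hj, hju⟩ := P.hu_provider hcc hu i₀ hpos
        obtain ⟨n, hn⟩ := P.root_int j lam hlam
        have step := P.reach_one u hj hn
        rw [← hju] at step
        set c' : P.ι → ℕ := Function.update c i₀ (c i₀ - 1) with hc'
        have hsupp' : ∀ i, ¬ P.isPos i → c' i = 0 := by
          intro i hip
          rw [hc', Function.update_apply]
          split
          · next h => exact absurd (h ▸ hpos) hip
          · exact hsupp i hip
        have hsum_split : ∑ i, c i = c i₀ + ∑ i ∈ Finset.univ.erase i₀, c i := by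
          rw [← Finset.add_sum_erase _ _ (Finset.mem_univ i₀)]
        have hsum'_split : ∑ i, c' i = (c i₀ - 1) + ∑ i ∈ Finset.univ.erase i₀, c i := by
          rw [← Finset.add_sum_erase _ c' (Finset.mem_univ i₀)]
          congr 1
          · rw [hc', Function.update_self]
          · apply Finset.sum_congr rfl
            intro i hi
            rw [hc', Function.update_apply, if_neg (Finset.mem_erase.mp hi).1]
        have hsum' : ∑ i, c' i ≤ N := by omega
        have hlam' : lam - u (P.coroot i₀) ∈ P.X := by
          apply sub_mem hlam
          rw [hju]
          split
          · exact P.coroot_mem j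
          · exact neg_mem (P.coroot_mem j)
        have tail := ih c' hsupp' hsum' _ hlam'
        have hfinal : lam - u (P.coroot i₀) - ∑ i, (c' i : ℝ) • u (P.coroot i)
            = lam - ∑ i, (c i : ℝ) • u (P.coroot i) := by
          have h1 : ∑ i, (c i : ℝ) • u (P.coroot i)
              = (c i₀ : ℝ) • u (P.coroot i₀)
                + ∑ i ∈ Finset.univ.erase i₀, (c i : ℝ) • u (P.coroot i) := by
            rw [← Finset.add_sum_erase _ _ (Finset.mem_univ i₀)]
          have h2 : ∑ i, (c' i : ℝ) • u (P.coroot i)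
              = ((c i₀ - 1 : ℕ) : ℝ) • u (P.coroot i₀)
                + ∑ i ∈ Finset.univ.erase i₀, (c i : ℝ) • u (P.coroot i) := by
            rw [← Finset.add_sum_erase _ _ (Finset.mem_univ i₀)]
            congr 1
            · rw [hc', Function.update_self]
            · apply Finset.sum_congr rfl
              intro i hi
              rw [hc', Function.update_apply, if_neg (Finset.mem_erase.mp hi).1]
          have hcast : ((c i₀ - 1 : ℕ) : ℝ) = (c i₀ : ℝ) - 1 := by
            have : 1 ≤ c i₀ := Nat.one_le_iff_ne_zero.mpr hi₀
            push_cast [this]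
            ring
          rw [h1, h2, hcast]
          module
        rw [hfinal] at tail
        exact Relation.ReflTransGen.trans step tail

/-- master reachability lemma -/
lemma reach_master {cc : V} (hcc : cc ∈ P.domC) {u : V ≃ₗ[ℝ] V} (hu : u ∈ P.Wfin)
    {lam tgt : V} (hlam : lam ∈ P.X) (c : P.ι → ℕ) (hsupp : ∀ i, ¬ P.isPos i → c i = 0)
    (htgt : tgt = lam - ∑ i, (c i : ℝ) • u (P.coroot i)) :
    P.ReachOpp u (⇑(transl lam) '' P.baseAlc) (⇑(transl tgt) '' P.baseAlc) := by
  rw [htgt]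
  exact P.reach_iter hcc hu (∑ i, c i) c hsupp le_rfl lam hlam

end Iterate


section RootCombinatorics

/-- the finite set of root functionals -/
noncomputable def Rset : Finset (V →ₗ[ℝ] ℝ) := Finset.image P.root Finset.univ

lemma root_mem_Rset (i : P.ι) : P.root i ∈ P.Rset :=
  Finset.mem_image_of_mem _ (Finset.mem_univ i)

lemma mem_Rset_iff {f : V →ₗ[ℝ] ℝ} : f ∈ P.Rset ↔ ∃ i, P.root i = f := by
  simp [Rset, eq_comm]

lemma isPos_of_pos_cc {cc : V} (hcc : cc ∈ P.domC) {j : P.ι} (h : 0 < P.root j cc) :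
    P.isPos j := by
  rcases P.sign_dichotomy hcc j with ⟨h1, _⟩ | ⟨j₂, _, _, _, h2⟩
  · exact h1
  · linarith

lemma root_cc_ne_zero {cc : V} (hcc : cc ∈ P.domC) (j : P.ι) : P.root j cc ≠ 0 := by
  rcases P.sign_dichotomy hcc j with ⟨_, h⟩ | ⟨j₂, _, _, _, h⟩ <;> intro h0 <;> linarith

/-- a root functional determines its coroot -/
lemma coroot_unique {i j : P.ι} (hroot : P.root i = P.root j) :
    P.coroot i = P.coroot j := by
  by_contra hne
  set a := P.coroot i with ha
  set b := P.coroot j with hb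
  have hTa : ∀ v ∈ Set.range P.coroot, v - P.root i v • a ∈ Set.range P.coroot := by
    rintro v ⟨k, rfl⟩
    obtain ⟨m, _, hm2⟩ := P.refl_root i k
    exact ⟨m, hm2⟩
  have hTb : ∀ v ∈ Set.range P.coroot, v - P.root i v • b ∈ Set.range P.coroot := by
    rintro v ⟨k, rfl⟩
    obtain ⟨m, _, hm2⟩ := P.refl_root j k
    rw [hroot]
    exact ⟨m, hm2⟩
  have hab : P.root i a = 2 := P.root_coroot_self i
  have hbb : P.root i b = 2 := by rw [hroot]; exact P.root_coroot_self j
  have key : ∀ n : ℕ, a + (2 * n : ℝ) • (a - b) ∈ Set.range P.coroot := by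
    intro n
    induction n with
    | zero => simpa using ⟨i, rfl⟩
    | succ n ih =>
        have hv : P.root i (a + (2 * n : ℝ) • (a - b)) = 2 := by
          rw [map_add, map_smul, map_sub, hab, hbb]
          simp
        have h1 := hTb _ ih
        have h2 := hTa _ h1
        have hval : P.root i (a + (2 * n : ℝ) • (a - b) - P.root i (a + (2 * n : ℝ) • (a - b)) • b)
            = -2 := by
          rw [map_sub, hv, map_smul, hbb]
          norm_num
        rw [hval, hv] at h2
        convert h2 using 1
        push_cast
        module
  have hinj : Function.Injective (fun n : ℕ => a + (2 * n : ℝ) • (a - b)) := by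
    intro m n hmn
    simp only [add_right_inj] at hmn
    have : ((2 * m : ℝ) - 2 * n) • (a - b) = 0 := by
      rw [sub_smul, hmn, sub_self]
    rcases smul_eq_zero.mp this with h | h
    · have : (m : ℝ) = n := by linarith [sub_eq_zero.mp h]
      exact_mod_cast this
    · exact absurd (sub_eq_zero.mp h) hne
  exact (Set.finite_range P.coroot).not_infinite
    (Set.infinite_of_injective_forall_mem hinj key)

lemma sLin_eq_of_root_eq {i j : P.ι} (hroot : P.root i = P.root j) :
    P.sLin i = P.sLin j := by
  have hc := P.coroot_unique hroot
  apply LinearEquiv.toLinearMap_injective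
  apply LinearMap.ext
  intro x
  show P.sLin i x = P.sLin j x
  rw [sLin_apply, sLin_apply, hroot, hc]

lemma sLin_eq_of_root_neg {i j : P.ι} (hroot : P.root i = - P.root j)
    (hcor : P.coroot i = - P.coroot j) : P.sLin i = P.sLin j := by
  apply LinearEquiv.toLinearMap_injective
  apply LinearMap.ext
  intro x
  show P.sLin i x = P.sLin j x
  rw [sLin_apply, sLin_apply, hroot, hcor]
  simp

end RootCombinatorics


section BForm

lemma comp_sLin_eq (b i : P.ι) :
    ∃ m, (∀ x, P.root m x = P.root i (P.sLin b x)) ∧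
      P.root m = P.root i - P.root i (P.coroot b) • P.root b ∧
      P.coroot m = P.coroot i - P.root b (P.coroot i) • P.coroot b := by
  obtain ⟨m, hm1, hm2⟩ := P.refl_root b i
  refine ⟨m, ?_, hm1, hm2⟩
  intro x
  rw [hm1, sLin_apply]
  simp only [LinearMap.sub_apply, LinearMap.smul_apply, smul_eq_mul, map_sub, map_smul,
    smul_eq_mul]
  ring

/-- the (possibly degenerate) Weyl-invariant form -/
noncomputable def Bf (x y : V) : ℝ := ∑ f ∈ P.Rset, f x * f y

lemma Bf_symm (x y : V) : P.Bf x y = P.Bf y x := by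
  unfold Bf; exact Finset.sum_congr rfl (fun f _ => mul_comm _ _)

lemma Bf_sub_right (x y z : V) : P.Bf x (y - z) = P.Bf x y - P.Bf x z := by
  unfold Bf
  rw [← Finset.sum_sub_distrib]
  exact Finset.sum_congr rfl (fun f _ => by rw [map_sub]; ring)

lemma Bf_smul_right (x : V) (r : ℝ) (y : V) : P.Bf x (r • y) = r * P.Bf x y := by
  unfold Bf
  rw [Finset.mul_sum]
  exact Finset.sum_congr rfl (fun f _ => by rw [map_smul]; simp; ring)

lemma Bf_neg_left (x y : V) : P.Bf (-x) y = - P.Bf x y := by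
  unfold Bf
  rw [← Finset.sum_neg_distrib]
  exact Finset.sum_congr rfl (fun f _ => by rw [map_neg]; ring)

lemma Bf_sLin (b : P.ι) (x y : V) : P.Bf (P.sLin b x) (P.sLin b y) = P.Bf x y := by
  unfold Bf
  refine Finset.sum_bij' (fun f _ => f.comp (P.sLin b).toLinearMap)
    (fun f _ => f.comp (P.sLin b).toLinearMap) ?_ ?_ ?_ ?_ ?_
  · intro f hf
    obtain ⟨i, rfl⟩ := P.mem_Rset_iff.mp hf
    obtain ⟨m, hm1, _, _⟩ := P.comp_sLin_eq b i
    have heq : (P.root i).comp (P.sLin b).toLinearMap = P.root m := by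
      apply LinearMap.ext; intro x; rw [hm1 x]; rfl
    show (P.root i).comp (P.sLin b).toLinearMap ∈ P.Rset
    rw [heq]
    exact P.root_mem_Rset m
  · intro f hf
    obtain ⟨i, rfl⟩ := P.mem_Rset_iff.mp hf
    obtain ⟨m, hm1, _, _⟩ := P.comp_sLin_eq b i
    have heq : (P.root i).comp (P.sLin b).toLinearMap = P.root m := by
      apply LinearMap.ext; intro x; rw [hm1 x]; rfl
    show (P.root i).comp (P.sLin b).toLinearMap ∈ P.Rset
    rw [heq]
    exact P.root_mem_Rset m
  · intro f hf
    apply LinearMap.ext; intro x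
    simp only [LinearMap.comp_apply, LinearEquiv.coe_coe]
    rw [sLin_sLin]
  · intro f hf
    apply LinearMap.ext; intro x
    simp only [LinearMap.comp_apply, LinearEquiv.coe_coe]
    rw [sLin_sLin]
  · intro f hf
    rfl

lemma Bf_coroot (i : P.ι) (x : V) :
    2 * P.Bf (P.coroot i) x = P.root i x * P.Bf (P.coroot i) (P.coroot i) := by
  have h := P.Bf_sLin i (P.coroot i) x
  rw [root_sLin_self] at h
  nth_rewrite 1 [sLin_apply] at h
  rw [Bf_neg_left, Bf_sub_right, Bf_smul_right] at h
  linarith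

lemma Bf_coroot_self_ge (i : P.ι) : 4 ≤ P.Bf (P.coroot i) (P.coroot i) := by
  unfold Bf
  have h : P.root i (P.coroot i) * P.root i (P.coroot i)
      ≤ ∑ f ∈ P.Rset, f (P.coroot i) * f (P.coroot i) :=
    Finset.single_le_sum (f := fun g : V →ₗ[ℝ] ℝ => g (P.coroot i) * g (P.coroot i))
      (fun f _ => mul_self_nonneg _) (P.root_mem_Rset i)
  rw [P.root_coroot_self i] at h
  linarith

lemma pairing_symm_eq (i j : P.ι) :
    P.root i (P.coroot j) * P.Bf (P.coroot i) (P.coroot i)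
      = P.root j (P.coroot i) * P.Bf (P.coroot j) (P.coroot j) := by
  have h1 := P.Bf_coroot i (P.coroot j)
  have h2 := P.Bf_coroot j (P.coroot i)
  have h3 := P.Bf_symm (P.coroot i) (P.coroot j)
  linarith

lemma pairing_pos (i j : P.ι) (h : 0 < P.root i (P.coroot j)) :
    0 < P.root j (P.coroot i) := by
  have h1 := P.pairing_symm_eq i j
  have h2 := P.Bf_coroot_self_ge i
  have h3 := P.Bf_coroot_self_ge j
  nlinarith

end BForm


section Simples

/-- a positive root is decomposable if it is a sum of at least two positive roots -/
def Decomp (i : P.ι) : Prop :=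
  ∃ d : P.ι → ℕ, (∀ j, ¬ P.isPos j → d j = 0) ∧
    P.root i = ∑ j, (d j : ℝ) • P.root j ∧ 2 ≤ ∑ j, d j

/-- a simple root: positive and indecomposable -/
def SimpleI (i : P.ι) : Prop := P.isPos i ∧ ¬ P.Decomp i

lemma sum_single_smul (a : P.ι) :
    (∑ j, (if j = a then (1 : ℝ) else 0) • P.root j) = P.root a := by
  have h : ∀ j ∈ Finset.univ, (if j = a then (1:ℝ) else 0) • P.root j
      = if j = a then P.root j else 0 := by
    intro j _; split <;> simp
  rw [Finset.sum_congr rfl h, Finset.sum_ite_eq' Finset.univ a P.root,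
    if_pos (Finset.mem_univ a)]

lemma decomp_of_two {i j₁ j₂ : P.ι} (h1 : P.isPos j₁) (h2 : P.isPos j₂)
    (h : P.root i = P.root j₁ + P.root j₂) : P.Decomp i := by
  refine ⟨fun j => (if j = j₁ then 1 else 0) + (if j = j₂ then 1 else 0), ?_, ?_, ?_⟩
  · intro j hj
    have e1 : j ≠ j₁ := fun e => hj (e ▸ h1)
    have e2 : j ≠ j₂ := fun e => hj (e ▸ h2)
    simp [e1, e2]
  · have key : ∀ j ∈ Finset.univ,
        (((if j = j₁ then 1 else 0) + (if j = j₂ then 1 else 0) : ℕ) : ℝ) • P.root j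
        = (if j = j₁ then (1:ℝ) else 0) • P.root j + (if j = j₂ then (1:ℝ) else 0) • P.root j := by
      intro j _
      by_cases e3 : j₁ = j₂
      · subst e3
        by_cases e1 : j = j₁ <;> simp [e1, two_smul]
      · by_cases e1 : j = j₁ <;> by_cases e2 : j = j₂ <;>
          simp_all [two_smul]
    rw [Finset.sum_congr rfl key, Finset.sum_add_distrib, sum_single_smul, sum_single_smul, h]
  · rw [Finset.sum_add_distrib]
    simp [Finset.sum_ite_eq']

set_option maxHeartbeats 1000000 in
/-- two roots cannot pair as a "double bond both ways": otherwise the dihedral group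
they generate produces infinitely many roots -/
lemma no_double_bond {a b : P.ι} (hne : P.root a ≠ P.root b) (hne' : P.root a ≠ - P.root b)
    (h1 : 2 ≤ P.root a (P.coroot b)) (h2 : 2 ≤ P.root b (P.coroot a)) : False := by
  set k : ℝ := P.root a (P.coroot b) with hk
  set k' : ℝ := P.root b (P.coroot a) with hk'
  -- independence of the two roots
  have hind : ∀ x y x' y' : ℝ,
      x • P.root a + y • P.root b = x' • P.root a + y' • P.root b → x = x' ∧ y = y' := by
    intro x y x' y' hxy
    have hdiff : (x - x') • P.root a = (y' - y) • P.root b := by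
      have e : (x - x') • P.root a - (y' - y) • P.root b
          = (x • P.root a + y • P.root b) - (x' • P.root a + y' • P.root b) := by module
      rw [hxy, sub_self] at e
      exact sub_eq_zero.mp e
    by_cases hx : x = x'
    · refine ⟨hx, ?_⟩
      rw [hx, sub_self, zero_smul] at hdiff
      have h0 := (smul_eq_zero.mp hdiff.symm).resolve_right (P.root_ne b)
      linarith [sub_eq_zero.mp (by linarith [h0] : y' - y = 0)]
    · exfalso
      have hx0 : x - x' ≠ 0 := sub_ne_zero.mpr hx
      have hprop : P.root a = ((y' - y) * (x - x')⁻¹) • P.root b := by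
        have h3 : (x - x')⁻¹ • ((x - x') • P.root a)
            = (x - x')⁻¹ • ((y' - y) • P.root b) := by rw [hdiff]
        rw [inv_smul_smul₀ hx0] at h3
        rw [h3, smul_smul, mul_comm]
      rcases P.reduced a b _ hprop with h | h
      · exact hne h
      · exact hne' h
  -- the double reflection step on coefficient pairs
  set step : ℝ × ℝ → ℝ × ℝ :=
    fun q => (-(q.1 + k' * (-(k * q.1) - q.2)), -(k * q.1) - q.2) with hstep
  set p : ℕ → ℝ × ℝ := fun n => step^[n] (1, 0) with hp
  have hp0 : p 0 = (1, 0) := rfl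
  have hpsucc : ∀ n, p (n + 1) = step (p n) := by
    intro n
    show step^[n + 1] (1, 0) = step (step^[n] (1, 0))
    rw [Function.iterate_succ_apply']
  clear_value step p
  -- the invariant
  have main : ∀ n, (∃ i, P.root i = (p n).1 • P.root a + (p n).2 • P.root b)
      ∧ |(p n).2| < |(p n).1|
      ∧ (∀ m, m < n → |(p m).1| < |(p n).1|) := by
    intro n
    induction n with
    | zero =>
        refine ⟨⟨a, by rw [hp0]; simp⟩, by rw [hp0]; simp, by omega⟩
    | succ n ih =>
        obtain ⟨⟨i, hi⟩, hyx, hmono⟩ := ih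
        obtain ⟨x, y, hq⟩ : ∃ x y, p n = (x, y) := ⟨(p n).1, (p n).2, rfl⟩
        rw [hq] at hi hyx
        have hxpos : 0 < |x| := lt_of_le_of_lt (abs_nonneg y) hyx
        -- first reflection, in `s_b`
        obtain ⟨m, _, hm2, _⟩ := P.comp_sLin_eq b i
        have hscal : P.root i (P.coroot b) = k * x + 2 * y := by
          rw [hi]
          simp only [LinearMap.add_apply, LinearMap.smul_apply, smul_eq_mul]
          rw [← hk, P.root_coroot_self b]
          ring
        obtain ⟨y1, hy1⟩ : ∃ t : ℝ, t = -(k * x) - y := ⟨_, rfl⟩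
        have hm : P.root m = x • P.root a + y1 • P.root b := by
          rw [hm2, hscal, hi, hy1]
          module
        have hy1abs : |x| < |y1| := by
          have e1 : |k * x| ≤ |k * x + y| + |y| := by
            have h := abs_add_le (k * x + y) (-y)
            have h2 : k * x + y + -y = k * x := by ring
            rw [h2, abs_neg] at h
            exact h
          have e2 : |k * x| = k * |x| := by
            rw [abs_mul, abs_of_pos (by linarith : (0:ℝ) < k)]
          have e3 : |y1| = |k * x + y| := by
            rw [hy1, show -(k * x) - y = -(k * x + y) by ring, abs_neg]
          nlinarith
        -- second reflection, in `s_a`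
        obtain ⟨m2, _, hm22, _⟩ := P.comp_sLin_eq a m
        have hscal2 : P.root m (P.coroot a) = 2 * x + k' * y1 := by
          rw [hm]
          simp only [LinearMap.add_apply, LinearMap.smul_apply, smul_eq_mul]
          rw [← hk', P.root_coroot_self a]
          ring
        obtain ⟨x1, hx1⟩ : ∃ t : ℝ, t = -(x + k' * y1) := ⟨_, rfl⟩
        have hm2' : P.root m2 = x1 • P.root a + y1 • P.root b := by
          rw [hm22, hscal2, hm, hx1]
          module
        have hx1abs : |y1| < |x1| := by
          have e1 : |k' * y1| ≤ |x + k' * y1| + |x| := by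
            have h := abs_add_le (x + k' * y1) (-x)
            have h2 : x + k' * y1 + -x = k' * y1 := by ring
            rw [h2, abs_neg] at h
            exact h
          have e2 : |k' * y1| = k' * |y1| := by
            rw [abs_mul, abs_of_pos (by linarith : (0:ℝ) < k')]
          have e3 : |x1| = |x + k' * y1| := by rw [hx1, abs_neg]
          nlinarith [abs_nonneg y1]
        have hpn1 : p (n + 1) = (x1, y1) := by
          rw [hpsucc n, hq, hstep, hx1, hy1]
        refine ⟨⟨m2, by rw [hpn1, hm2']⟩, by rw [hpn1]; exact hx1abs, ?_⟩
        intro m' hm'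
        rw [hpn1]
        show |(p m').1| < |x1|
        rcases Nat.lt_succ_iff_lt_or_eq.mp hm' with h | h
        · have hh : |(p m').1| < |x| := by
            have h2 := hmono m' h
            rw [hq] at h2
            exact h2
          exact lt_trans hh (lt_trans hy1abs hx1abs)
        · have h2 : p m' = (x, y) := by rw [h, hq]
          rw [h2]
          show |x| < |x1|
          exact lt_trans hy1abs hx1abs
  -- infinitely many distinct roots: contradiction
  have hinj : Function.Injective
      (fun n => (p n).1 • P.root a + (p n).2 • P.root b) := by
    intro m n hmn
    by_contra hne2
    obtain ⟨he1, he2⟩ := hind _ _ _ _ hmn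
    rcases Nat.lt_or_ge m n with h | h
    · have := (main n).2.2 m h
      rw [he1] at this
      exact lt_irrefl _ this
    · rcases Nat.lt_or_ge n m with h' | h'
      · have := (main m).2.2 n h'
        rw [he1] at this
        exact lt_irrefl _ this
      · exact hne2 (by omega)
  have hmem : ∀ n, (p n).1 • P.root a + (p n).2 • P.root b ∈ (↑P.Rset : Set (V →ₗ[ℝ] ℝ)) := by
    intro n
    obtain ⟨⟨i, hi⟩, -, -⟩ := main n
    rw [← hi]
    exact P.root_mem_Rset i
  exact (P.Rset.finite_toSet).not_infinite
    (Set.infinite_of_injective_forall_mem hinj hmem)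

end Simples


section LemmaP

set_option maxHeartbeats 1000000 in
/-- reflection in a simple root permutes the other positive roots (key lemma) -/
lemma refl_simple_pos_aux {cc : V} (hcc : cc ∈ P.domC) {b : P.ι} (hb : P.SimpleI b) :
    ∀ N : ℕ, ∀ j, P.isPos j → P.root j ≠ P.root b →
      ∀ n : ℤ, P.root j (P.coroot b) = n → n.toNat ≤ N →
      ∀ m, P.root m = P.root j - P.root j (P.coroot b) • P.root b → P.isPos m := by
  have hbcc : 0 < P.root b cc := hcc b hb.1
  intro N
  induction N with
  | zero =>
      intro j hj hne n hn hN m hm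
      have hn0 : (n : ℝ) ≤ 0 := by exact_mod_cast Int.le_of_lt_add_one (by omega : n < 0 + 1)
      have hjcc : 0 < P.root j cc := hcc j hj
      apply P.isPos_of_pos_cc hcc
      rw [hm]
      simp only [LinearMap.sub_apply, LinearMap.smul_apply, smul_eq_mul]
      rw [hn]
      nlinarith
  | succ N ih =>
      intro j hj hne n hn hN m hm
      have hjcc : 0 < P.root j cc := hcc j hj
      have hne' : P.root j ≠ - P.root b := by
        intro h
        have := congrArg (fun f : V →ₗ[ℝ] ℝ => f cc) h
        simp only [LinearMap.neg_apply] at this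
        linarith
      -- the value of the reflected root at cc
      have hmcc : P.root m cc = P.root j cc - (n : ℝ) * P.root b cc := by
        rw [hm]
        simp only [LinearMap.sub_apply, LinearMap.smul_apply, smul_eq_mul]
        rw [hn]
      by_cases hpos : 0 < P.root m cc
      · exact P.isPos_of_pos_cc hcc hpos
      exfalso
      have hneg : P.root m cc < 0 :=
        lt_of_le_of_ne (not_lt.mp hpos) (P.root_cc_ne_zero hcc m)
      -- so n ≥ 1
      have hn1 : 1 ≤ n := by
        by_contra h
        have : (n : ℝ) ≤ 0 := by exact_mod_cast (by omega : n ≤ 0)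
        nlinarith
      -- partner of m
      rcases P.sign_dichotomy hcc m with ⟨_, h⟩ | ⟨m₂, hm₂p, hr, hcor, _⟩
      · linarith
      -- m₂ has root n•β - root j
      have hm₂root : P.root m₂ = (n : ℝ) • P.root b - P.root j := by
        have : - P.root m = P.root m₂ := by rw [hr, neg_neg]
        rw [← this, hm, hn]
        module
      rcases eq_or_lt_of_le hn1 with heq | hgt
      · -- n = 1 : β = root j + root m₂, contradicting simplicity
        have : P.root b = P.root j + P.root m₂ := by
          rw [hm₂root, ← heq]
          push_cast
          module
        exact hb.2 (P.decomp_of_two hj hm₂p this)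
      · -- n ≥ 2
        have hn2 : 2 ≤ n := hgt
        have hpair : 0 < P.root b (P.coroot j) := by
          apply P.pairing_pos j b
          rw [hn]
          exact_mod_cast (by omega : (0:ℤ) < n)
        obtain ⟨nk, hnk⟩ := P.root_int b (P.coroot j) (P.coroot_mem j)
        have hnk1 : 1 ≤ nk := by
          have : (0:ℝ) < nk := hnk ▸ hpair
          exact_mod_cast (by exact_mod_cast this : (0:ℤ) < nk)
        rcases eq_or_lt_of_le hnk1 with hk1 | hk2
        · -- k' = 1 : consider β - root j
          obtain ⟨m₃, _, hm₃, _⟩ := P.comp_sLin_eq j b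
          have hm₃root : P.root m₃ = P.root b - P.root j := by
            rw [hm₃, hnk, ← hk1]
            push_cast
            module
          by_cases hw : 0 < P.root m₃ cc
          · -- β = root m₃ + root j decomposes β
            have h3 : P.root b = P.root m₃ + P.root j := by rw [hm₃root]; module
            exact hb.2 (P.decomp_of_two (P.isPos_of_pos_cc hcc hw) hj h3)
          · have hwn : P.root m₃ cc < 0 :=
              lt_of_le_of_ne (not_lt.mp hw) (P.root_cc_ne_zero hcc m₃)
            rcases P.sign_dichotomy hcc m₃ with ⟨_, h⟩ | ⟨m₄, hm₄p, hr4, hcor4, _⟩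
            · linarith
            have hm₄root : P.root m₄ = P.root j - P.root b := by
              have : - P.root m₃ = P.root m₄ := by rw [hr4, neg_neg]
              rw [← this, hm₃root]
              module
            -- m₄ ≠ β as roots
            have hm₄ne : P.root m₄ ≠ P.root b := by
              intro h4
              have h5 : P.root j = (2 : ℝ) • P.root b := by
                have := hm₄root.symm.trans h4
                have h6 : P.root j = P.root b + P.root b := sub_eq_iff_eq_add.mp this
                rw [h6]
                module
              rcases P.reduced j b 2 h5 with h | h
              · exact hne h
              · exact hne' h
            -- pairing of m₄ with b
            have hm₄pair : P.root m₄ (P.coroot b) = ((n - 2 : ℤ) : ℝ) := by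
              rw [hm₄root]
              simp only [LinearMap.sub_apply]
              rw [hn, P.root_coroot_self b]
              push_cast
              ring
            obtain ⟨m₅, _, hm₅, _⟩ := P.comp_sLin_eq b m₄
            have hm₅pos : P.isPos m₅ :=
              ih m₄ hm₄p hm₄ne (n - 2) hm₄pair (by omega) m₅ hm₅
            have hm₅root : P.root m₅ = P.root j - ((n - 1 : ℤ) : ℝ) • P.root b := by
              rw [hm₅, hm₄pair, hm₄root]
              push_cast
              module
            -- β = root m₅ + root m₂ decomposes β
            have h5 : P.root b = P.root m₅ + P.root m₂ := by
              rw [hm₅root, hm₂root]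
              push_cast
              module
            exact hb.2 (P.decomp_of_two hm₅pos hm₂p h5)
        · -- both pairings ≥ 2 : impossible
          have h2a : 2 ≤ P.root j (P.coroot b) := by
            rw [hn]
            exact_mod_cast hn2
          have h2b : 2 ≤ P.root b (P.coroot j) := by
            rw [hnk]
            exact_mod_cast hk2
          exact P.no_double_bond hne hne' h2a h2b

/-- reflection in a simple root sends any other positive root to a positive root -/
lemma refl_simple_pos {cc : V} (hcc : cc ∈ P.domC) {b : P.ι} (hb : P.SimpleI b)
    {j : P.ι} (hj : P.isPos j) (hne : P.root j ≠ P.root b) :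
    ∃ m, P.isPos m ∧ (∀ x, P.root m x = P.root j (P.sLin b x)) ∧
      P.root m = P.root j - P.root j (P.coroot b) • P.root b ∧
      P.coroot m = P.coroot j - P.root b (P.coroot j) • P.coroot b := by
  obtain ⟨m, hm1, hm2, hm3⟩ := P.comp_sLin_eq b j
  obtain ⟨n, hn⟩ := P.root_int j (P.coroot b) (P.coroot_mem b)
  exact ⟨m, P.refl_simple_pos_aux hcc hb n.toNat j hj hne n hn le_rfl m hm2, hm1, hm2, hm3⟩

end LemmaP


section SDspanSec

/-- the ℕ-span of the simple roots -/
noncomputable def SDspan : AddSubmonoid (V →ₗ[ℝ] ℝ) :=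
  AddSubmonoid.closure {f | ∃ b, P.SimpleI b ∧ P.root b = f}

/-- the number of positive roots with smaller value at `cc` -/
noncomputable def heightM (cc : V) (i : P.ι) : ℕ :=
  ((P.Rset.filter (fun f => 0 < f cc)).filter (fun f => f cc < P.root i cc)).card

lemma heightM_lt {cc : V} (hcc : cc ∈ P.domC) {i j : P.ι} (hj : P.isPos j)
    (h : P.root j cc < P.root i cc) : P.heightM cc j < P.heightM cc i := by
  apply Finset.card_lt_card
  rw [Finset.ssubset_iff_of_subset]
  · refine ⟨P.root j, ?_, ?_⟩
    · rw [Finset.mem_filter, Finset.mem_filter]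
      exact ⟨⟨P.root_mem_Rset j, hcc j hj⟩, h⟩
    · rw [Finset.mem_filter]
      rintro ⟨-, h2⟩
      exact lt_irrefl _ h2
  · intro f hf
    rw [Finset.mem_filter] at hf ⊢
    exact ⟨hf.1, by linarith [hf.2]⟩

lemma pos_root_mem_SDspan_aux {cc : V} (hcc : cc ∈ P.domC) :
    ∀ N : ℕ, ∀ i, P.isPos i → P.heightM cc i < N → P.root i ∈ P.SDspan := by
  intro N
  induction N with
  | zero => intro i _ h; omega
  | succ N ih =>
      intro i hi hN
      by_cases hs : P.Decomp i
      · obtain ⟨d, hdsupp, hdsum, hd2⟩ := hs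
        have hval : P.root i cc = ∑ j, (d j : ℝ) * P.root j cc := by
          have := congrArg (fun f : V →ₗ[ℝ] ℝ => f cc) hdsum
          simpa using this
        have hterm_nonneg : ∀ j ∈ Finset.univ, 0 ≤ (d j : ℝ) * P.root j cc := by
          intro j _
          by_cases hdj : d j = 0
          · simp [hdj]
          · have hjp : P.isPos j := by
              by_contra h
              exact hdj (hdsupp j h)
            have := hcc j hjp
            positivity
        -- every index in the support has strictly smaller value at cc
        have hdec : ∀ j₀, d j₀ ≠ 0 → P.root j₀ cc < P.root i cc := by
          intro j₀ hd0
          have hj₀p : P.isPos j₀ := by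
            by_contra h
            exact hd0 (hdsupp j₀ h)
          have hv₀ : 0 < P.root j₀ cc := hcc j₀ hj₀p
          have hsplit : ∑ j, (d j : ℝ) * P.root j cc
              = (d j₀ : ℝ) * P.root j₀ cc
                + ∑ j ∈ Finset.univ.erase j₀, (d j : ℝ) * P.root j cc := by
            rw [← Finset.add_sum_erase _ _ (Finset.mem_univ j₀)]
          rcases Nat.lt_or_ge (d j₀) 2 with h1 | h2
          · -- d j₀ = 1, so some other index contributes
            have hd1 : d j₀ = 1 := by omega
            have : ∑ j ∈ Finset.univ.erase j₀, d j ≠ 0 := by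
              have := Finset.add_sum_erase Finset.univ d (Finset.mem_univ j₀)
              omega
            obtain ⟨j₁, hj₁mem, hj₁⟩ := Finset.exists_ne_zero_of_sum_ne_zero this
            have hj₁p : P.isPos j₁ := by
              by_contra h
              exact hj₁ (hdsupp j₁ h)
            have hv₁ : 0 < P.root j₁ cc := hcc j₁ hj₁p
            have hb : (d j₁ : ℝ) * P.root j₁ cc
                ≤ ∑ j ∈ Finset.univ.erase j₀, (d j : ℝ) * P.root j cc :=
              Finset.single_le_sum (f := fun j => (d j : ℝ) * P.root j cc)
                (fun j _ => hterm_nonneg j (Finset.mem_univ j)) hj₁mem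
            have hd₁ : (1 : ℝ) ≤ (d j₁ : ℝ) := by exact_mod_cast Nat.one_le_iff_ne_zero.mpr hj₁
            rw [hval, hsplit, hd1]
            push_cast
            have hx := mul_le_mul_of_nonneg_right hd₁ hv₁.le
            linarith
          · -- d j₀ ≥ 2
            have hsum_nonneg : 0 ≤ ∑ j ∈ Finset.univ.erase j₀, (d j : ℝ) * P.root j cc :=
              Finset.sum_nonneg (fun j hj => hterm_nonneg j (Finset.mem_univ j))
            have hd₂ : (2 : ℝ) ≤ (d j₀ : ℝ) := by exact_mod_cast h2
            rw [hval, hsplit]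
            have hx := mul_le_mul_of_nonneg_right hd₂ hv₀.le
            linarith
        -- conclude by induction
        rw [hdsum]
        apply AddSubmonoid.sum_mem
        intro j _
        by_cases hdj : d j = 0
        · simp only [hdj, Nat.cast_zero, zero_smul]
          exact zero_mem _
        · have hjp : P.isPos j := by
            by_contra h
            exact hdj (hdsupp j h)
          have hmem : P.root j ∈ P.SDspan := by
            apply ih j hjp
            have := P.heightM_lt hcc hjp (hdec j hdj)
            omega
          have heq : ((d j : ℝ) • P.root j : V →ₗ[ℝ] ℝ) = (d j) • P.root j :=
            Nat.cast_smul_eq_nsmul ℝ (d j) (P.root j)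
          rw [heq]
          exact AddSubmonoid.nsmul_mem _ hmem (d j)
      · exact AddSubmonoid.subset_closure ⟨i, ⟨hi, hs⟩, rfl⟩

lemma pos_root_mem_SDspan {cc : V} (hcc : cc ∈ P.domC) {i : P.ι} (hi : P.isPos i) :
    P.root i ∈ P.SDspan :=
  P.pos_root_mem_SDspan_aux hcc (P.heightM cc i + 1) i hi (by omega)

/-- if all simple roots are nonnegative somewhere, so are all positive roots -/
lemma SDspan_nonneg {v : V} {f : V →ₗ[ℝ] ℝ} (hf : f ∈ P.SDspan)
    (h : ∀ b, P.SimpleI b → 0 ≤ P.root b v) : 0 ≤ f v := by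
  induction hf using AddSubmonoid.closure_induction with
  | mem g hg => obtain ⟨b, hb, rfl⟩ := hg; exact h b hb
  | zero => simp
  | add g₁ g₂ _ _ h₁ h₂ =>
      have : (g₁ + g₂) v = g₁ v + g₂ v := rfl
      rw [this]
      linarith

/-- positive functionals in the ℕ-span see a simple root positively -/
lemma SDspan_pos_extract {v : V} {f : V →ₗ[ℝ] ℝ} (hf : f ∈ P.SDspan) (h : 0 < f v) :
    ∃ b, P.SimpleI b ∧ 0 < P.root b v := by
  induction hf using AddSubmonoid.closure_induction with
  | mem g hg =>
      obtain ⟨b, hb, rfl⟩ := hg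
      exact ⟨b, hb, h⟩
  | zero => simp at h
  | add g₁ g₂ _ _ h₁ h₂ =>
      have he : (g₁ + g₂) v = g₁ v + g₂ v := rfl
      rw [he] at h
      rcases lt_or_ge 0 (g₁ v) with h3 | h3
      · exact h₁ h3
      · exact h₂ (by linarith)

end SDspanSec


section Words

lemma sLin_inv (i : P.ι) : (P.sLin i)⁻¹ = P.sLin i := by
  rw [eq_comm, eq_inv_iff_mul_eq_one]
  apply LinearEquiv.toLinearMap_injective
  apply LinearMap.ext
  intro x
  exact P.sLin_sLin i x

lemma sLin_mul_self (i : P.ι) : P.sLin i * P.sLin i = 1 := by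
  apply LinearEquiv.toLinearMap_injective
  apply LinearMap.ext
  intro x
  exact P.sLin_sLin i x

/-- conjugation formula for reflections -/
lemma sLin_conj_explicit {v : V ≃ₗ[ℝ] V} {i m : P.ι}
    (hroot : ∀ x, P.root m x = P.root i (v x)) (hcor : P.coroot m = v⁻¹ (P.coroot i)) :
    P.sLin m = v⁻¹ * P.sLin i * v := by
  apply LinearEquiv.toLinearMap_injective
  apply LinearMap.ext
  intro x
  show P.sLin m x = v⁻¹ (P.sLin i (v x))
  rw [sLin_apply, sLin_apply, map_sub, map_smul, hroot x, hcor]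
  have : v⁻¹ (v x) = x := LinearEquiv.symm_apply_apply _ _
  rw [this]

/-- the subgroup generated by the simple reflections -/
def Wsimp : Subgroup (V ≃ₗ[ℝ] V) :=
  Subgroup.closure {g | ∃ b, P.SimpleI b ∧ g = P.sLin b}

lemma sLin_mem_Wsimp_of_pos {cc : V} (hcc : cc ∈ P.domC) :
    ∀ N : ℕ, ∀ i, P.isPos i → P.heightM cc i < N → P.sLin i ∈ P.Wsimp := by
  intro N
  induction N with
  | zero => intro i _ h; omega
  | succ N ih =>
      intro i hi hN
      by_cases hsimp : P.SimpleI i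
      · exact Subgroup.subset_closure ⟨i, hsimp, rfl⟩
      · -- find a simple root pairing positively with `i`
        have h2 : (0:ℝ) < P.root i (P.coroot i) := by
          rw [P.root_coroot_self i]; norm_num
        obtain ⟨b, hb, hbpos⟩ :=
          P.SDspan_pos_extract (P.pos_root_mem_SDspan hcc hi) h2
        have hipos : 0 < P.root i (P.coroot b) := P.pairing_pos b i hbpos
        by_cases hne : P.root i = P.root b
        · rw [P.sLin_eq_of_root_eq hne]
          exact Subgroup.subset_closure ⟨b, hb, rfl⟩
        · obtain ⟨m, hmpos, hmptw, hmroot, hmcor⟩ := P.refl_simple_pos hcc hb hi hne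
          have hlt : P.root m cc < P.root i cc := by
            have : P.root m cc = P.root i cc - P.root i (P.coroot b) * P.root b cc := by
              rw [hmroot]
              simp only [LinearMap.sub_apply, LinearMap.smul_apply, smul_eq_mul]
            rw [this]
            have hbcc := hcc b hb.1
            nlinarith
          have hmW : P.sLin m ∈ P.Wsimp := by
            apply ih m hmpos
            have := P.heightM_lt hcc hmpos hlt
            omega
          have hconj : P.sLin m = (P.sLin b)⁻¹ * P.sLin i * P.sLin b := by
            apply P.sLin_conj_explicit hmptw
            rw [P.sLin_inv b, hmcor, sLin_apply]
          have : P.sLin i = P.sLin b * P.sLin m * P.sLin b := by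
            rw [hconj, P.sLin_inv b]
            have hb2 := P.sLin_mul_self b
            calc P.sLin i = (P.sLin b * P.sLin b) * P.sLin i * (P.sLin b * P.sLin b) := by
                  rw [hb2]; simp
            _ = P.sLin b * (P.sLin b * P.sLin i * P.sLin b) * P.sLin b := by group
          rw [this]
          exact mul_mem (mul_mem (Subgroup.subset_closure ⟨b, hb, rfl⟩) hmW)
            (Subgroup.subset_closure ⟨b, hb, rfl⟩)

lemma sLin_mem_Wsimp {cc : V} (hcc : cc ∈ P.domC) (i : P.ι) : P.sLin i ∈ P.Wsimp := by
  rcases P.pos_or_neg i with h | ⟨j, hj, hr, hc⟩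
  · exact P.sLin_mem_Wsimp_of_pos hcc (P.heightM cc i + 1) i h (by omega)
  · rw [P.sLin_eq_of_root_neg hr hc]
    exact P.sLin_mem_Wsimp_of_pos hcc (P.heightM cc j + 1) j hj (by omega)

lemma word_prod_inv (l : List P.ι) :
    ((l.map P.sLin).prod)⁻¹ = ((l.reverse.map P.sLin).prod) := by
  induction l with
  | nil => simp
  | cons b t ih =>
      rw [List.map_cons, List.prod_cons, mul_inv_rev, ih, List.reverse_cons, List.map_append,
        List.prod_append]
      simp [P.sLin_inv b]

/-- every element of the Weyl group is a product of simple reflections -/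
lemma exists_simple_word {cc : V} (hcc : cc ∈ P.domC) {w : V ≃ₗ[ℝ] V} (hw : w ∈ P.Wfin) :
    ∃ l : List P.ι, (∀ b ∈ l, P.SimpleI b) ∧ w = (l.map P.sLin).prod := by
  have hW : w ∈ P.Wsimp := by
    have hle : P.Wfin ≤ P.Wsimp := by
      rw [Wfin]
      apply Subgroup.closure_le _ |>.mpr
      rintro g ⟨i, rfl⟩
      exact P.sLin_mem_Wsimp hcc i
    exact hle hw
  clear hw
  induction hW using Subgroup.closure_induction with
  | mem g hg =>
      obtain ⟨b, hb, rfl⟩ := hg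
      exact ⟨[b], by simpa using hb, by simp⟩
  | one => exact ⟨[], by simp, by simp⟩
  | mul g₁ g₂ hg₁ hg₂ h₁ h₂ =>
      obtain ⟨l₁, hl₁, rfl⟩ := h₁
      obtain ⟨l₂, hl₂, rfl⟩ := h₂
      refine ⟨l₁ ++ l₂, ?_, by rw [List.map_append, List.prod_append]⟩
      intro b hbmem
      rcases List.mem_append.mp hbmem with h | h
      · exact hl₁ b h
      · exact hl₂ b h
  | inv g hg h =>
      obtain ⟨l, hl, rfl⟩ := h
      refine ⟨l.reverse, ?_, P.word_prod_inv l⟩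
      intro b hbmem
      exact hl b (List.mem_reverse.mp hbmem)

/-- products of simple reflections lie in the Weyl group -/
lemma word_prod_mem_Wfin (l : List P.ι) : ((l.map P.sLin).prod) ∈ P.Wfin := by
  induction l with
  | nil => simp
  | cons b t ih =>
      rw [List.map_cons, List.prod_cons]
      exact mul_mem (P.sLin_mem_Wfin b) ih

end Words


section Inversions

/-- the inversion count of `w` (with respect to the regular point `cc`) -/
noncomputable def invN (cc : V) (w : V ≃ₗ[ℝ] V) : ℕ :=
  ((P.Rset.filter (fun f => 0 < f cc)).filter (fun f => f (w cc) < 0)).card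

lemma root_wcc_ne_zero {cc : V} (hcc : cc ∈ P.domC) {w : V ≃ₗ[ℝ] V} (hw : w ∈ P.Wfin)
    (i : P.ι) : P.root i (w cc) ≠ 0 := by
  obtain ⟨j, hj1, -⟩ := (P.root_coroot_equivariant w hw).1 i
  rw [← hj1 cc]
  exact P.root_cc_ne_zero hcc j

lemma root_sLin_self_val (b : P.ι) (y : V) : P.root b (P.sLin b y) = - P.root b y := by
  rw [sLin_apply, map_sub, map_smul, P.root_coroot_self b]
  simp
  ring

/-- composing with a simple reflection preserves the other positive root functionals -/
lemma comp_simple_pos {cc : V} (hcc : cc ∈ P.domC) {b : P.ι} (hb : P.SimpleI b)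
    {f : V →ₗ[ℝ] ℝ} (hf : f ∈ P.Rset) (hfpos : 0 < f cc) (hne : f ≠ P.root b) :
    f.comp (P.sLin b).toLinearMap ∈ P.Rset ∧ 0 < f (P.sLin b cc) := by
  obtain ⟨j, rfl⟩ := P.mem_Rset_iff.mp hf
  have hj : P.isPos j := P.isPos_of_pos_cc hcc hfpos
  obtain ⟨m, hmpos, hmptw, -, -⟩ := P.refl_simple_pos hcc hb hj hne
  have hcomp : (P.root j).comp (P.sLin b).toLinearMap = P.root m := by
    apply LinearMap.ext; intro x; rw [hmptw x]; rfl
  constructor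
  · rw [hcomp]; exact P.root_mem_Rset m
  · rw [← hmptw cc]; exact hcc m hmpos

lemma invN_step {cc : V} (hcc : cc ∈ P.domC) {b : P.ι} (hb : P.SimpleI b)
    {w : V ≃ₗ[ℝ] V} (hneg : P.root b (w cc) < 0) :
    P.invN cc (P.sLin b * w) + 1 = P.invN cc w := by
  classical
  set S : Finset (V →ₗ[ℝ] ℝ) := P.Rset.filter (fun f => 0 < f cc) with hS
  set T : Finset (V →ₗ[ℝ] ℝ) := S.filter (fun f => f (w cc) < 0) with hT
  set T' : Finset (V →ₗ[ℝ] ℝ) := S.filter (fun f => f ((P.sLin b * w) cc) < 0) with hT'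
  have happly : ∀ (f : V →ₗ[ℝ] ℝ), f ((P.sLin b * w) cc) = f (P.sLin b (w cc)) := fun f => rfl
  have hbT : P.root b ∈ T := by
    rw [hT, Finset.mem_filter, hS, Finset.mem_filter]
    exact ⟨⟨P.root_mem_Rset b, hcc b hb.1⟩, hneg⟩
  have hcomp_val : ∀ (f : V →ₗ[ℝ] ℝ) (y : V),
      (f.comp (P.sLin b).toLinearMap) y = f (P.sLin b y) := fun f y => rfl
  have hforward : ∀ f ∈ T', f.comp (P.sLin b).toLinearMap ∈ T.erase (P.root b) := by
    intro f hf
    rw [hT', Finset.mem_filter, hS, Finset.mem_filter] at hf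
    obtain ⟨⟨hfR, hfpos⟩, hfneg⟩ := hf
    rw [happly] at hfneg
    have hfne : f ≠ P.root b := by
      rintro rfl
      rw [root_sLin_self_val] at hfneg
      linarith
    obtain ⟨hmem, hpos⟩ := P.comp_simple_pos hcc hb hfR hfpos hfne
    rw [Finset.mem_erase, hT, Finset.mem_filter, hS, Finset.mem_filter]
    refine ⟨?_, ⟨hmem, by rw [hcomp_val]; exact hpos⟩, by rw [hcomp_val]; exact hfneg⟩
    · intro hcontra
      have := congrArg (fun g : V →ₗ[ℝ] ℝ => g (P.sLin b cc)) hcontra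
      simp only [hcomp_val] at this
      rw [sLin_sLin, root_sLin_self_val] at this
      have h1 := hcc b hb.1
      linarith
  have hback : ∀ g ∈ T.erase (P.root b), g.comp (P.sLin b).toLinearMap ∈ T' := by
    intro g hg
    rw [Finset.mem_erase, hT, Finset.mem_filter, hS, Finset.mem_filter] at hg
    obtain ⟨hgne, ⟨hgR, hgpos⟩, hgneg⟩ := hg
    obtain ⟨hmem, hpos⟩ := P.comp_simple_pos hcc hb hgR hgpos hgne
    rw [hT', Finset.mem_filter, hS, Finset.mem_filter]
    refine ⟨⟨hmem, by rw [hcomp_val]; exact hpos⟩, ?_⟩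
    rw [happly, hcomp_val, sLin_sLin]
    exact hgneg
  have hdouble : ∀ (f : V →ₗ[ℝ] ℝ),
      (f.comp (P.sLin b).toLinearMap).comp (P.sLin b).toLinearMap = f := by
    intro f
    apply LinearMap.ext
    intro x
    show f (P.sLin b (P.sLin b x)) = f x
    rw [sLin_sLin]
  have hcard : T'.card = (T.erase (P.root b)).card := by
    apply Finset.card_bij' (fun f _ => f.comp (P.sLin b).toLinearMap)
      (fun g _ => g.comp (P.sLin b).toLinearMap) hforward hback
    · intro f _; exact hdouble f
    · intro g _; exact hdouble g
  show T'.card + 1 = T.card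
  rw [hcard, Finset.card_erase_of_mem hbT]
  have hpos : 1 ≤ T.card := Finset.card_pos.mpr ⟨P.root b, hbT⟩
  omega

lemma exists_simple_inversion {cc : V} (hcc : cc ∈ P.domC) {w : V ≃ₗ[ℝ] V}
    (hw : w ∈ P.Wfin) (h : 0 < P.invN cc w) :
    ∃ b, P.SimpleI b ∧ P.root b (w cc) < 0 := by
  by_contra hno
  push_neg at hno
  obtain ⟨f, hf⟩ := Finset.card_pos.mp h
  rw [Finset.mem_filter, Finset.mem_filter] at hf
  obtain ⟨⟨hfR, hfpos⟩, hfneg⟩ := hf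
  obtain ⟨i, rfl⟩ := P.mem_Rset_iff.mp hfR
  have hi : P.isPos i := P.isPos_of_pos_cc hcc hfpos
  have := P.SDspan_nonneg (P.pos_root_mem_SDspan hcc hi)
    (fun b hb => le_of_not_gt (by simpa using hno b hb))
  linarith

end Inversions


section Deletion

set_option maxHeartbeats 1000000 in
/-- a word in simple reflections with no inversions is trivial (deletion condition) -/
lemma word_reduce {cc : V} (hcc : cc ∈ P.domC) :
    ∀ n : ℕ, ∀ l : List P.ι, l.length ≤ n → (∀ b ∈ l, P.SimpleI b) →
      P.invN cc ((l.map P.sLin).prod) = 0 → (l.map P.sLin).prod = 1 := by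
  intro n
  induction n with
  | zero =>
      intro l hlen _ _
      have hnil : l = [] := List.length_eq_zero_iff.mp (by omega)
      subst hnil
      simp
  | succ n ih =>
      intro l hlen hsimp hinv
      match l with
      | [] => simp
      | b :: t =>
        have hbt : P.SimpleI b := hsimp b List.mem_cons_self
        have hw : ((b :: t).map P.sLin).prod = P.sLin b * (t.map P.sLin).prod := by
          rw [List.map_cons, List.prod_cons]
        have huW : (t.map P.sLin).prod ∈ P.Wfin := P.word_prod_mem_Wfin t
        -- the head letter must invert along the tail
        have hneg : P.root b ((t.map P.sLin).prod cc) < 0 := by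
          rcases lt_trichotomy (P.root b ((t.map P.sLin).prod cc)) 0 with h | h | h
          · exact h
          · exact absurd h (P.root_wcc_ne_zero hcc huW b)
          · exfalso
            have hval : P.root b (((b :: t).map P.sLin).prod cc) < 0 := by
              rw [hw]
              show P.root b (P.sLin b ((t.map P.sLin).prod cc)) < 0
              rw [root_sLin_self_val]
              linarith
            have hmem : P.root b ∈ (P.Rset.filter (fun f => 0 < f cc)).filter
                (fun f => f (((b :: t).map P.sLin).prod cc) < 0) := by
              rw [Finset.mem_filter, Finset.mem_filter]
              exact ⟨⟨P.root_mem_Rset b, hcc b hbt.1⟩, hval⟩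
            have := Finset.card_pos.mpr ⟨P.root b, hmem⟩
            rw [invN] at hinv
            omega
        -- scan for the first sign change along the prefixes of t
        have scan : ∀ m : ℕ, m ≤ t.length →
            P.root b (((t.take m).map P.sLin).prod cc) < 0 →
            ∃ r, r < m ∧ 0 < P.root b (((t.take r).map P.sLin).prod cc) ∧
              P.root b (((t.take (r+1)).map P.sLin).prod cc) < 0 := by
          intro m
          induction m with
          | zero =>
              intro _ h0
              simp only [List.take_zero, List.map_nil, List.prod_nil] at h0
              have h1 : (1 : V ≃ₗ[ℝ] V) cc = cc := rfl
              rw [h1] at h0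
              linarith [hcc b hbt.1]
          | succ m ihm =>
              intro hm h0
              rcases lt_trichotomy 0 (P.root b (((t.take m).map P.sLin).prod cc)) with h | h | h
              · exact ⟨m, by omega, h, h0⟩
              · exact absurd h.symm (P.root_wcc_ne_zero hcc (P.word_prod_mem_Wfin _) b)
              · obtain ⟨r, hr, h1, h2⟩ := ihm (by omega) h
                exact ⟨r, by omega, h1, h2⟩
        obtain ⟨r, hr, hpos', hneg'⟩ := scan t.length le_rfl (by rw [List.take_length]; exact hneg)
        have hvW : ((t.take r).map P.sLin).prod ∈ P.Wfin := P.word_prod_mem_Wfin _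
        set v : V ≃ₗ[ℝ] V := ((t.take r).map P.sLin).prod with hv
        -- letter at position r
        set c := t.get ⟨r, hr⟩ with hc
        have hcs : P.SimpleI c := hsimp c (List.mem_cons_of_mem b (t.get_mem _))
        have htake : t.take (r+1) = t.take r ++ [c] := by
          rw [hc]
          have := (List.take_concat_get hr).symm
          rwa [List.concat_eq_append] at this
        have hv1 : ((t.take (r+1)).map P.sLin).prod = v * P.sLin c := by
          rw [htake, List.map_append, List.prod_append, ← hv]
          simp only [List.map_cons, List.map_nil, List.prod_cons, List.prod_nil, mul_one]
        -- equivariance data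
        obtain ⟨jr, hjr1, hjr2⟩ := (P.root_coroot_equivariant v hvW).1 b
        have hjrpos : P.isPos jr := by
          apply P.isPos_of_pos_cc hcc
          rw [hjr1 cc]
          exact hpos'
        have hkey : P.root jr = P.root c := by
          by_contra hne2
          obtain ⟨m2, hm2pos, hm2ptw, -, -⟩ := P.refl_simple_pos hcc hcs hjrpos hne2
          have hval : P.root b (((t.take (r+1)).map P.sLin).prod cc) = P.root m2 cc := by
            rw [hv1]
            show P.root b (v (P.sLin c cc)) = _
            rw [← hjr1 (P.sLin c cc), ← hm2ptw cc]
          rw [hval] at hneg'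
          linarith [hcc m2 hm2pos]
        have hconj : P.sLin c = v⁻¹ * P.sLin b * v := by
          rw [← P.sLin_eq_of_root_eq hkey]
          exact P.sLin_conj_explicit hjr1 hjr2
        -- word surgery : the product collapses
        have hsplit : t = t.take (r+1) ++ t.drop (r+1) := (List.take_append_drop _ t).symm
        have hu : (t.map P.sLin).prod = v * P.sLin c * ((t.drop (r+1)).map P.sLin).prod := by
          conv_lhs => rw [hsplit]
          rw [List.map_append, List.prod_append, hv1]
        have hwred : ((b :: t).map P.sLin).prod
            = (((t.take r) ++ t.drop (r+1)).map P.sLin).prod := by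
          rw [hw, hu, hconj]
          rw [List.map_append, List.prod_append, ← hv]
          have hbb := P.sLin_mul_self b
          calc P.sLin b * (v * (v⁻¹ * P.sLin b * v) * ((t.drop (r+1)).map P.sLin).prod)
              = (P.sLin b * P.sLin b) * (v * ((t.drop (r+1)).map P.sLin).prod) := by group
          _ = v * ((t.drop (r+1)).map P.sLin).prod := by rw [hbb, one_mul]
        rw [hwred]
        apply ih
        · have h1 : (t.take r).length = r := List.length_take_of_le (by omega)
          have h2 : (t.drop (r+1)).length = t.length - (r+1) := List.length_drop
          have h3 : (b :: t).length = t.length + 1 := rfl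
          rw [List.length_append, h1, h2]
          omega
        · intro x hx
          rcases List.mem_append.mp hx with h | h
          · exact hsimp x (List.mem_cons_of_mem b (List.take_subset _ _ h))
          · exact hsimp x (List.mem_cons_of_mem b (List.drop_subset _ _ h))
        · rw [← hwred]
          exact hinv

/-- uniqueness of the dominant representative in a Weyl orbit -/
lemma dominant_unique_aux {cc : V} (hcc : cc ∈ P.domC) :
    ∀ n : ℕ, ∀ w ∈ P.Wfin, P.invN cc w ≤ n →
      ∀ ν : V, (∀ i, P.isPos i → 0 ≤ P.root i ν) →
        (∀ i, P.isPos i → 0 ≤ P.root i (w ν)) → w ν = ν := by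
  intro n
  induction n with
  | zero =>
      intro w hw hinv ν hν hwv
      obtain ⟨l, hl, rfl⟩ := P.exists_simple_word hcc hw
      rw [P.word_reduce hcc l.length l le_rfl hl (by omega)]
      simp
  | succ n ih =>
      intro w hw hinv ν hν hwv
      by_cases h0 : P.invN cc w = 0
      · obtain ⟨l, hl, rfl⟩ := P.exists_simple_word hcc hw
        rw [P.word_reduce hcc l.length l le_rfl hl h0]
        simp
      · obtain ⟨b, hb, hneg⟩ := P.exists_simple_inversion hcc hw (by omega)
        -- β(wν) = 0
        have hge : 0 ≤ P.root b (w ν) := hwv b hb.1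
        have hle : P.root b (w ν) ≤ 0 := by
          obtain ⟨j, hj1, -⟩ := (P.root_coroot_equivariant w hw).1 b
          have hjneg : ¬ P.isPos j := by
            intro hj
            have := hcc j hj
            rw [hj1 cc] at this
            linarith
          rcases P.pos_or_neg j with h | ⟨j₂, hj₂, hr, -⟩
          · exact absurd h hjneg
          · rw [← hj1 ν, hr]
            simp only [LinearMap.neg_apply]
            linarith [hν j₂ hj₂]
        have heq : P.root b (w ν) = 0 := le_antisymm hle hge
        have hfix : P.sLin b (w ν) = w ν := by
          rw [sLin_apply, heq]
          simp
        have hW' : P.sLin b * w ∈ P.Wfin := mul_mem (P.sLin_mem_Wfin b) hw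
        have hstep := P.invN_step hcc hb hneg (w := w)
        have happ : (P.sLin b * w) ν = w ν := hfix
        have := ih (P.sLin b * w) hW' (by omega) ν hν (by
          intro i hi
          rw [happ]
          exact hwv i hi)
        rw [happ] at this
        exact this

end Deletion


section ChainL

lemma Bf_cc_coroot_pos {cc : V} (hcc : cc ∈ P.domC) {i : P.ι} (hi : P.isPos i) :
    0 < P.Bf cc (P.coroot i) := by
  have h1 := P.Bf_coroot i cc
  have h2 := P.Bf_coroot_self_ge i
  have h3 := hcc i hi
  have h4 : P.Bf cc (P.coroot i) = P.Bf (P.coroot i) cc := P.Bf_symm _ _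
  nlinarith

lemma Bf_bound {cc : V} {ν : V} {u : V ≃ₗ[ℝ] V} (hu : u ∈ P.Wfin) :
    P.Bf cc (u ν) ≤ (∑ f ∈ P.Rset, |f cc|) * (∑ g ∈ P.Rset, |g ν|) := by
  have hM : ∀ f ∈ P.Rset, |f (u ν)| ≤ ∑ g ∈ P.Rset, |g ν| := by
    intro f hf
    obtain ⟨i, rfl⟩ := P.mem_Rset_iff.mp hf
    obtain ⟨j, hj1, -⟩ := (P.root_coroot_equivariant u hu).1 i
    rw [← hj1 ν]
    exact Finset.single_le_sum (f := fun g : V →ₗ[ℝ] ℝ => |g ν|)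
      (fun g _ => abs_nonneg _) (P.root_mem_Rset j)
  rw [Bf, Finset.sum_mul]
  apply Finset.sum_le_sum
  intro f hf
  calc f cc * f (u ν) ≤ |f cc * f (u ν)| := le_abs_self _
  _ = |f cc| * |f (u ν)| := abs_mul _ _
  _ ≤ |f cc| * (∑ g ∈ P.Rset, |g ν|) :=
      mul_le_mul_of_nonneg_left (hM f hf) (abs_nonneg _)

set_option maxHeartbeats 1000000 in
/-- key dominance lemma: for dominant ν and any `w ∈ W`, `ν - wν` is a nonnegative
integral combination of positive coroots -/
lemma dominance_lemma {cc : V} (hcc : cc ∈ P.domC) {w : V ≃ₗ[ℝ] V} (hw : w ∈ P.Wfin)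
    {ν : V} (hν : P.Dominant ν) :
    ∃ c : P.ι → ℕ, (∀ i, ¬ P.isPos i → c i = 0) ∧
      ν - w ν = ∑ i, (c i : ℝ) • P.coroot i := by
  by_cases hpos_ex : ∃ i₀, P.isPos i₀
  swap
  · -- no positive roots : the index type is empty and W is trivial
    have hempty : IsEmpty P.ι := by
      constructor
      intro i
      rcases P.pos_or_neg i with h | ⟨j, hj, -, -⟩
      · exact hpos_ex ⟨i, h⟩
      · exact hpos_ex ⟨j, hj⟩
    have hrange : Set.range P.sLin = ∅ := by
      rw [Set.range_eq_empty_iff]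
      exact ⟨fun i => hempty.false i⟩
    have hbot : w = 1 := by
      have : w ∈ Subgroup.closure (∅ : Set (V ≃ₗ[ℝ] V)) := by
        rw [← hrange]
        exact hw
      rw [Subgroup.closure_empty, Subgroup.mem_bot] at this
      exact this
    refine ⟨0, fun i _ => rfl, ?_⟩
    rw [hbot]
    simp
  obtain ⟨i₀, hi₀⟩ := hpos_ex
  set posF : Finset P.ι := Finset.univ.filter (fun i => P.isPos i) with hposF
  have hposF_ne : posF.Nonempty := ⟨i₀, by rw [hposF, Finset.mem_filter]; exact ⟨Finset.mem_univ _, hi₀⟩⟩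
  set imF : Finset ℝ := posF.image (fun i => P.Bf cc (P.coroot i)) with himF
  have himF_ne : imF.Nonempty := hposF_ne.image _
  set δ : ℝ := imF.min' himF_ne with hδ
  have hδpos : 0 < δ := by
    obtain ⟨i, hi, hieq⟩ := Finset.mem_image.mp (imF.min'_mem himF_ne)
    rw [hδ, ← hieq]
    exact P.Bf_cc_coroot_pos hcc (Finset.mem_filter.mp hi).2
  have hδle : ∀ i, P.isPos i → δ ≤ P.Bf cc (P.coroot i) := by
    intro i hi
    apply Finset.min'_le
    exact Finset.mem_image_of_mem _ (by rw [hposF, Finset.mem_filter]; exact ⟨Finset.mem_univ _, hi⟩)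
  set K : ℝ := (∑ f ∈ P.Rset, |f cc|) * (∑ g ∈ P.Rset, |g ν|) with hK
  -- the raising chain
  have claim : ∀ n : ℕ, ∀ u ∈ P.Wfin, K - P.Bf cc (u ν) ≤ n * δ →
      ∃ c : P.ι → ℕ, (∀ i, ¬ P.isPos i → c i = 0) ∧
        ν - u ν = ∑ i, (c i : ℝ) • P.coroot i := by
    intro n
    induction n with
    | zero =>
        intro u hu hn
        by_cases hdom : ∀ i, P.isPos i → 0 ≤ P.root i (u ν)
        · have heq := P.dominant_unique_aux hcc (P.invN cc u) u hu le_rfl ν hν.2 hdom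
          refine ⟨0, fun i _ => rfl, ?_⟩
          rw [heq]
          simp
        · exfalso
          push_neg at hdom
          obtain ⟨i, hi, hlt⟩ := hdom
          obtain ⟨nint, hnint⟩ := P.root_int i (u ν) (P.Wfin_smul_mem_X hu hν.1)
          have hbound := P.Bf_bound (cc := cc) (ν := ν) (mul_mem (P.sLin_mem_Wfin i) hu)
          have happ : (P.sLin i * u) ν = u ν - P.root i (u ν) • P.coroot i := P.sLin_apply i (u ν)
          have hφ : P.Bf cc ((P.sLin i * u) ν)
              = P.Bf cc (u ν) - P.root i (u ν) * P.Bf cc (P.coroot i) := by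
            rw [happ, Bf_sub_right, Bf_smul_right]
          have hn1 : (1:ℝ) ≤ - P.root i (u ν) := by
            rw [hnint] at hlt ⊢
            have : nint < 0 := by exact_mod_cast hlt
            have h2 : nint ≤ -1 := by omega
            have : (nint : ℝ) ≤ -1 := by exact_mod_cast h2
            linarith
          have hinc : P.Bf cc (u ν) + δ ≤ P.Bf cc ((P.sLin i * u) ν) := by
            rw [hφ]
            have h1 := hδle i hi
            nlinarith
          simp only [Nat.cast_zero, zero_mul] at hn
          rw [← hK] at hbound
          linarith
    | succ n ih =>
        intro u hu hn
        by_cases hdom : ∀ i, P.isPos i → 0 ≤ P.root i (u ν)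
        · have heq := P.dominant_unique_aux hcc (P.invN cc u) u hu le_rfl ν hν.2 hdom
          refine ⟨0, fun i _ => rfl, ?_⟩
          rw [heq]
          simp
        · push_neg at hdom
          obtain ⟨i, hi, hlt⟩ := hdom
          obtain ⟨nint, hnint⟩ := P.root_int i (u ν) (P.Wfin_smul_mem_X hu hν.1)
          have hW' : P.sLin i * u ∈ P.Wfin := mul_mem (P.sLin_mem_Wfin i) hu
          have happ : (P.sLin i * u) ν = u ν - P.root i (u ν) • P.coroot i := P.sLin_apply i (u ν)
          have hφ : P.Bf cc ((P.sLin i * u) ν)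
              = P.Bf cc (u ν) - P.root i (u ν) * P.Bf cc (P.coroot i) := by
            rw [happ, Bf_sub_right, Bf_smul_right]
          have hn1 : (1:ℝ) ≤ - P.root i (u ν) := by
            rw [hnint] at hlt ⊢
            have : nint < 0 := by exact_mod_cast hlt
            have h2 : nint ≤ -1 := by omega
            have : (nint : ℝ) ≤ -1 := by exact_mod_cast h2
            linarith
          have hinc : P.Bf cc (u ν) + δ ≤ P.Bf cc ((P.sLin i * u) ν) := by
            rw [hφ]
            have h1 := hδle i hi
            nlinarith
          obtain ⟨c', hc'supp, hc'⟩ := ih (P.sLin i * u) hW' (by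
            push_cast
            push_cast at hn
            linarith)
          -- the coefficient added at i
          set m : ℕ := (-nint).toNat with hm
          have hmcast : (m : ℝ) = - P.root i (u ν) := by
            have hneg2 : nint < 0 := by
              rw [hnint] at hlt
              exact_mod_cast hlt
            have h1 : (m : ℤ) = -nint := by
              rw [hm]
              exact Int.toNat_of_nonneg (by omega)
            have h2 : (m : ℝ) = ((-nint : ℤ) : ℝ) := by exact_mod_cast congrArg (fun z : ℤ => (z : ℝ)) h1
            rw [h2, hnint]
            push_cast
            ring
          refine ⟨fun j => c' j + if j = i then m else 0, ?_, ?_⟩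
          · intro j hj
            have : j ≠ i := fun e => hj (e ▸ hi)
            simp [hc'supp j hj, this]
          · have hsum : ∑ j, ((c' j + if j = i then m else 0 : ℕ) : ℝ) • P.coroot j
                = (∑ j, (c' j : ℝ) • P.coroot j) + (m : ℝ) • P.coroot i := by
              have hsplit : ∀ j ∈ Finset.univ,
                  ((c' j + if j = i then m else 0 : ℕ) : ℝ) • P.coroot j
                  = (c' j : ℝ) • P.coroot j + (if j = i then (m:ℝ) • P.coroot j else 0) := by
                intro j _
                by_cases hji : j = i <;> simp [hji, add_smul]
              rw [Finset.sum_congr rfl hsplit, Finset.sum_add_distrib]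
              congr 1
              rw [Finset.sum_ite_eq' Finset.univ i (fun j => (m:ℝ) • P.coroot j),
                if_pos (Finset.mem_univ i)]
            rw [hsum, ← hc']
            rw [hmcast, happ]
            module
  -- conclude using the archimedean property
  obtain ⟨n, hn⟩ := exists_nat_ge ((K - P.Bf cc (w ν)) / δ)
  apply claim n w hw
  rw [div_le_iff₀ hδpos] at hn
  linarith

end ChainL

/-- For every `w ∈ W`, the translation `t_{wμ}` is strongly admissible; more precisely,
for every `u ∈ W` and every dominant `ν ⪯ μ`, some sequence of affine reflections in
the `u`-opposite direction carries `t_{uμ}(ā)` to `t_ν(ā)`. -/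
theorem transl_mem_admSt (μ : V) (hμ : P.Dominant μ) :
    (∀ w ∈ P.Wfin, transl (w μ) ∈ P.AdmSt μ) ∧
    (∀ u ∈ P.Wfin, ∀ ν : V, P.Dominant ν → P.domOrder ν μ →
      P.ReachOpp u (⇑(transl (u μ)) '' P.baseAlc) (⇑(transl ν) '' P.baseAlc)) := by
  by_cases hbase : P.baseAlc.Nonempty
  swap
  · -- degenerate case: the base alcove is empty
    have hempty : P.baseAlc = ∅ := Set.not_nonempty_iff_eq_empty.mp hbase
    constructor
    · intro w hw
      refine ⟨P.transl_smul_inWaffCoset hw hμ.1, ?_⟩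
      intro w' _
      rw [hempty]
      simp only [Set.image_empty]
      exact Relation.ReflTransGen.refl
    · intro u _ ν _ _
      rw [hempty]
      simp only [Set.image_empty]
      exact Relation.ReflTransGen.refl
  · obtain ⟨xb, hxb⟩ := hbase
    -- the regular dominant point
    have hcc : -xb ∈ P.domC := by
      intro i hi
      have := hxb i hi
      rw [map_neg]
      linarith [this.2]
    -- general reachability towards a target
    have key : ∀ u ∈ P.Wfin, ∀ tgt : V,
        (∃ c : P.ι → ℕ, (∀ i, ¬ P.isPos i → c i = 0) ∧
          μ - (u⁻¹ : V ≃ₗ[ℝ] V) tgt = ∑ i, (c i : ℝ) • P.coroot i) →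
        P.ReachOpp u (⇑(transl (u μ)) '' P.baseAlc) (⇑(transl tgt) '' P.baseAlc) := by
      intro u hu tgt ⟨c, hsupp, hc⟩
      apply P.reach_master hcc hu (P.Wfin_smul_mem_X hu hμ.1) c hsupp
      have hmap : ∑ i, (c i : ℝ) • u (P.coroot i) = u (∑ i, (c i : ℝ) • P.coroot i) := by
        rw [map_sum]
        exact Finset.sum_congr rfl (fun i _ => (map_smul u _ _).symm)
      rw [hmap, ← hc, map_sub]
      have huu : u ((u⁻¹ : V ≃ₗ[ℝ] V) tgt) = tgt := by
        exact LinearEquiv.apply_symm_apply u tgt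
      rw [huu]
      abel
    constructor
    · -- part 1 : strong admissibility of t_{wμ}
      intro w hw
      refine ⟨P.transl_smul_inWaffCoset hw hμ.1, ?_⟩
      intro w' hw'
      apply key w' hw' (w μ)
      obtain ⟨c, hsupp, hc⟩ :=
        P.dominance_lemma hcc (mul_mem (inv_mem hw') hw) hμ
      refine ⟨c, hsupp, ?_⟩
      rw [← hc]
      rfl
    · -- part 2 : reaching a dominant ν ⪯ μ
      intro u hu ν hν hord
      apply key u hu ν
      obtain ⟨c₁, hc₁supp, hc₁⟩ := hord
      obtain ⟨c₂, hc₂supp, hc₂⟩ := P.dominance_lemma hcc (inv_mem hu) hν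
      refine ⟨fun i => c₁ i + c₂ i, fun i hi => by simp only []; rw [hc₁supp i hi, hc₂supp i hi], ?_⟩
      have hsplit : ∀ i ∈ Finset.univ, ((c₁ i + c₂ i : ℕ) : ℝ) • P.coroot i
          = (c₁ i : ℝ) • P.coroot i + (c₂ i : ℝ) • P.coroot i := by
        intro i _
        push_cast
        rw [add_smul]
      rw [Finset.sum_congr rfl hsplit, Finset.sum_add_distrib, ← hc₁, ← hc₂]
      abel

end BasedRootSystem

end Paper
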